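/- arXiv:1112.5647 — 4 statements merged into one kernel-verified Lean document; each statement's English description precedes it below -/
import Mathlib

section
/- Let G=(V,E) be a finite graph of maximum degree 3, let u,v∈V be distinct, and let A∈S_{u,v}(G). Then u and v lie in the same connected component of (V,A); every other connected component containing at least one edge is a cycle; and the component containing u and v has cyclomatic number at most 2. -/
open SimpleGraph

variable {V : Type*}

/-- Degree of a vertex `v` in the spanning subgraph `(V, A)`:
the number of edges of `A` incident to `v`. -/
def degIn [DecidableEq V] (A : Finset (Sym2 V)) (v : V) : ℕ :=
  (A.filter fun e => v ∈ e).card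

/-- The cyclomatic number of the spanning subgraph `(V, A)`: the minimum number of edges
whose removal from `(V, A)` leaves an acyclic graph. -/
noncomputable def cyclomatic [DecidableEq V] (A : Finset (Sym2 V)) : ℕ :=
  sInf {k | ∃ B ⊆ A, B.card = k ∧
    (SimpleGraph.fromEdgeSet ((A \ B : Finset (Sym2 V)) : Set (Sym2 V))).IsAcyclic}

open scoped Classical in
/-- The edges of `A` belonging to the connected component of `(V, A)` containing `u`. -/
noncomputable def componentEdges [DecidableEq V] (A : Finset (Sym2 V)) (u : V) :
    Finset (Sym2 V) :=
  A.filter fun e => ∃ x ∈ e, (SimpleGraph.fromEdgeSet (A : Set (Sym2 V))).Reachable u x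

namespace SuvAux

lemma edge_mem_of_walk {D : Finset (Sym2 V)} {a b : V}
    (p : (SimpleGraph.fromEdgeSet (D : Set (Sym2 V))).Walk a b) {e : Sym2 V}
    (he : e ∈ p.edges) : e ∈ D ∧ ¬ e.IsDiag := by
  have h := p.edges_subset_edgeSet he
  rw [edgeSet_fromEdgeSet] at h
  exact ⟨by exact_mod_cast h.1, h.2⟩

lemma mem_support_of_mem_edge {G : SimpleGraph V} {a b x : V} {p : G.Walk a b} {e : Sym2 V}
    (he : e ∈ p.edges) (hx : x ∈ e) : x ∈ p.support := by
  induction e using Sym2.ind with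
  | _ s t =>
    rw [Sym2.mem_iff] at hx
    rcases hx with rfl | rfl
    · exact p.fst_mem_support_of_mem_edges he
    · exact p.snd_mem_support_of_mem_edges he

lemma exists_mem_mem_support {G : SimpleGraph V} {a b : V} (p : G.Walk a b) {e : Sym2 V}
    (he : e ∈ p.edges) : ∃ x ∈ e, x ∈ p.support := by
  revert he
  induction e using Sym2.ind with
  | _ s t => exact fun he => ⟨s, by simp, p.fst_mem_support_of_mem_edges he⟩

lemma adj_of_mem_mem {D : Finset (Sym2 V)} {e : Sym2 V} (he : e ∈ D) :
    ∀ {x y : V}, x ∈ e → y ∈ e → x ≠ y →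
      (SimpleGraph.fromEdgeSet (D : Set (Sym2 V))).Adj x y := by
  induction e using Sym2.ind with
  | _ a b =>
    intro x y hx hy hxy
    rw [Sym2.mem_iff] at hx hy
    rw [fromEdgeSet_adj]
    refine ⟨?_, hxy⟩
    have : s(x, y) = s(a, b) := by
      rcases hx with rfl | rfl <;> rcases hy with rfl | rfl
      · exact absurd rfl hxy
      · rfl
      · exact Sym2.eq_swap
      · exact absurd rfl hxy
    rw [this]; exact_mod_cast he

lemma even_sum_degIn [DecidableEq V] {A : Finset (Sym2 V)} (hnd : ∀ e ∈ A, ¬ e.IsDiag)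
    (K : Finset V) (hK : ∀ e ∈ A, ∀ x ∈ e, ∀ y ∈ e, x ∈ K → y ∈ K) :
    Even (∑ w ∈ K, degIn A w) := by
  classical
  have hswap : ∑ w ∈ K, degIn A w = ∑ e ∈ A, (K.filter (fun w => w ∈ e)).card := by
    unfold degIn
    simp_rw [Finset.card_filter]
    rw [Finset.sum_comm]
  rw [hswap]
  apply Finset.even_sum
  intro e he
  induction e using Sym2.ind with
  | _ a b =>
    have hab : a ≠ b := by
      intro h; exact hnd _ he (by simp [h])
    by_cases ha : a ∈ K
    · have hb : b ∈ K := hK _ he a (by simp) b (by simp) ha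
      have : K.filter (fun w => w ∈ s(a, b)) = {a, b} := by
        ext w
        simp only [Finset.mem_filter, Sym2.mem_iff, Finset.mem_insert, Finset.mem_singleton]
        constructor
        · tauto
        · rintro (rfl | rfl) <;> simp [ha, hb]
      rw [this, Finset.card_insert_of_notMem (by simp [hab]), Finset.card_singleton]
      exact ⟨1, rfl⟩
    · have hb : b ∉ K := fun hb => ha (hK _ he b (by simp) a (by simp) hb)
      have : K.filter (fun w => w ∈ s(a, b)) = ∅ := by
        ext w
        simp only [Finset.mem_filter, Sym2.mem_iff, Finset.notMem_empty, iff_false, not_and]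
        rintro hw (rfl | rfl) <;> tauto
      simp only [Sym2.mem_iff] at this
      simp [this]

lemma two_edges_of_interior {G : SimpleGraph V} {x : V} :
    ∀ {a b : V} (p : G.Walk a b), p.IsPath → x ∈ p.support → x ≠ a → x ≠ b →
    ∃ e₁ ∈ p.edges, ∃ e₂ ∈ p.edges, e₁ ≠ e₂ ∧ x ∈ e₁ ∧ x ∈ e₂ := by
  intro a b p
  induction p with
  | nil => intro _ hx hxa _; simp at hx; exact absurd hx hxa
  | @cons a c b h q ih =>
    intro hp hx hxa hxb
    rw [Walk.support_cons, List.mem_cons] at hx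
    rcases hx with rfl | hx
    · exact absurd rfl hxa
    by_cases hxc : x = c
    · subst hxc
      obtain ⟨d, hd, q', rfl⟩ := Walk.exists_eq_cons_of_ne hxb q
      refine ⟨s(a, x), by simp, s(x, d), by simp, ?_, by simp, by simp⟩
      intro hcon
      rw [Sym2.eq_iff] at hcon
      rcases hcon with ⟨rfl, -⟩ | ⟨rfl, -⟩
      · exact h.ne rfl
      · rw [Walk.cons_isPath_iff] at hp
        refine hp.2 ?_
        rw [Walk.support_cons]
        exact List.mem_cons_of_mem _ q'.start_mem_support
    · obtain ⟨e₁, h1, e₂, h2, hne, hx1, hx2⟩ := ih hp.of_cons hx hxc hxb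
      exact ⟨e₁, by simp [h1], e₂, by simp [h2], hne, hx1, hx2⟩

lemma cycle_two_edges_at_base [DecidableEq V] {G : SimpleGraph V} {x : V} {d : G.Walk x x}
    (hd : d.IsCycle) :
    ∃ e₁ ∈ d.edges, ∃ e₂ ∈ d.edges, e₁ ≠ e₂ ∧ x ∈ e₁ ∧ x ∈ e₂ := by
  cases d with
  | nil => exact absurd rfl hd.ne_nil
  | @cons _ c _ h q =>
    obtain ⟨t, ht, q', hq'⟩ := Walk.exists_eq_cons_of_ne h.ne q.reverse
    have he₂ : s(x, t) ∈ q.edges := by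
      have : s(x, t) ∈ q.reverse.edges := by rw [hq']; simp
      rwa [Walk.edges_reverse, List.mem_reverse] at this
    have hnodup : (Walk.cons h q).edges.Nodup := hd.isTrail.edges_nodup
    rw [Walk.edges_cons, List.nodup_cons] at hnodup
    refine ⟨s(x, c), by simp, s(x, t), by simp [he₂], ?_, by simp, by simp⟩
    intro hcon
    exact hnodup.1 (hcon ▸ he₂)

lemma cycle_two_edges [DecidableEq V] {G : SimpleGraph V} {w x : V} {c : G.Walk w w}
    (hc : c.IsCycle) (hx : x ∈ c.support) :
    ∃ e₁ ∈ c.edges, ∃ e₂ ∈ c.edges, e₁ ≠ e₂ ∧ x ∈ e₁ ∧ x ∈ e₂ := by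
  obtain ⟨e₁, h1, e₂, h2, hne, hx1, hx2⟩ := cycle_two_edges_at_base (hc.rotate hx)
  rw [(c.rotate_edges x hx).mem_iff] at h1 h2
  exact ⟨e₁, h1, e₂, h2, hne, hx1, hx2⟩

lemma escape {G : SimpleGraph V} {S : List V} :
    ∀ {a t : V}, G.Walk a t → a ∈ S → t ∉ S →
      ∃ x x', x ∈ S ∧ x' ∉ S ∧ G.Adj x x' := by
  intro a t q
  induction q with
  | nil => intro ha ht; exact absurd ha ht
  | @cons a c t h q ih =>
    intro ha ht
    by_cases hc : c ∈ S
    · exact ih hc ht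
    · exact ⟨a, c, ha, hc, h⟩

lemma fromEdgeSet_erase [DecidableEq V] (D : Finset (Sym2 V)) (e : Sym2 V) :
    SimpleGraph.fromEdgeSet ((D.erase e : Finset (Sym2 V)) : Set (Sym2 V))
      = (SimpleGraph.fromEdgeSet (D : Set (Sym2 V))).deleteEdges {e} := by
  ext x y
  simp only [fromEdgeSet_adj, deleteEdges_adj, Finset.coe_erase, Set.mem_diff,
    Set.mem_singleton_iff, Finset.mem_coe]
  tauto

lemma reachable_delete_of_reachable {G : SimpleGraph V} {x y : V}
    (hxy : (G.deleteEdges {s(x, y)}).Reachable x y) :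
    ∀ {a b : V}, G.Reachable a b → (G.deleteEdges {s(x, y)}).Reachable a b := by
  intro a b hab
  obtain ⟨p⟩ := hab
  induction p with
  | nil => exact Reachable.refl _
  | @cons a c b h q ih =>
    refine Reachable.trans ?_ ih
    by_cases he : s(a, c) = s(x, y)
    · rw [Sym2.eq_iff] at he
      rcases he with ⟨rfl, rfl⟩ | ⟨rfl, rfl⟩
      · exact hxy
      · exact hxy.symm.mono (by rw [Sym2.eq_swap])
    · exact Adj.reachable (by rw [deleteEdges_adj]; exact ⟨h, by simpa using he⟩)

lemma exists_acyclic_sdiff [DecidableEq V] (D : Finset (Sym2 V)) :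
    ∃ B ⊆ D, (SimpleGraph.fromEdgeSet ((D \ B : Finset (Sym2 V)) : Set (Sym2 V))).IsAcyclic ∧
      ∀ a b : V, (SimpleGraph.fromEdgeSet (D : Set (Sym2 V))).Reachable a b →
        (SimpleGraph.fromEdgeSet ((D \ B : Finset (Sym2 V)) : Set (Sym2 V))).Reachable a b := by
  induction D using Finset.strongInduction with
  | _ D ih =>
    by_cases hac : (SimpleGraph.fromEdgeSet (D : Set (Sym2 V))).IsAcyclic
    · exact ⟨∅, Finset.empty_subset _, by simpa using hac, by simpa using fun a b h => h⟩
    · rw [SimpleGraph.IsAcyclic] at hac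
      push_neg at hac
      obtain ⟨x0, c, hc⟩ := hac
      have hne : c.edges ≠ [] := by
        have h3 := hc.three_le_length
        intro h
        have := c.length_edges
        rw [h] at this
        simp at this
        omega
      obtain ⟨e, he⟩ := List.exists_mem_of_ne_nil _ hne
      obtain ⟨heD, hdiag⟩ : e ∈ D ∧ ¬ e.IsDiag := by
        have h := c.edges_subset_edgeSet he
        rw [edgeSet_fromEdgeSet] at h
        exact ⟨by exact_mod_cast h.1, h.2⟩
      obtain ⟨⟨px, py⟩, rfl⟩ := e.exists_rep
      have hreach : ((SimpleGraph.fromEdgeSet (D : Set (Sym2 V))).deleteEdges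
          {s(px, py)}).Reachable px py :=
        (adj_and_reachable_delete_edges_iff_exists_cycle.mpr ⟨x0, c, hc, he⟩).2
      obtain ⟨B', hB'sub, hB'ac, hB'reach⟩ := ih (D.erase s(px, py))
        (Finset.erase_ssubset heD)
      have hsd : D \ insert s(px, py) B' = D.erase s(px, py) \ B' := by
        ext f
        simp only [Finset.mem_sdiff, Finset.mem_insert, Finset.mem_erase]
        tauto
      refine ⟨insert s(px, py) B', ?_, ?_, ?_⟩
      · exact Finset.insert_subset heD (hB'sub.trans (Finset.erase_subset _ _))
      · rw [hsd]; exact hB'ac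
      · intro a b hab
        rw [hsd]
        apply hB'reach
        rw [fromEdgeSet_erase]
        exact reachable_delete_of_reachable hreach hab

lemma card_le_of_connected [DecidableEq V] (D : Finset (Sym2 V)) (S : Finset V) (x : V)
    (hx : x ∈ S)
    (hconn : ∀ a ∈ S, (SimpleGraph.fromEdgeSet (D : Set (Sym2 V))).Reachable a x) :
    S.card ≤ D.card + 1 := by
  classical
  set G' := SimpleGraph.fromEdgeSet (D : Set (Sym2 V)) with hG'
  have key : ∀ a ∈ S.erase x, ∃ b, s(a, b) ∈ D ∧ G'.dist b x < G'.dist a x := by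
    intro a ha
    obtain ⟨hax, haS⟩ := Finset.mem_erase.mp ha
    have hr := hconn a haS
    have hpos : 0 < G'.dist a x := hr.pos_dist_of_ne hax
    obtain ⟨p, hp⟩ := hr.exists_walk_length_eq_dist
    cases p with
    | nil => rw [Walk.length_nil] at hp; omega
    | @cons _ m _ h q =>
      refine ⟨m, ?_, ?_⟩
      · have h' := h
        rw [hG', SimpleGraph.fromEdgeSet_adj] at h'
        exact_mod_cast h'.1
      · have hd := dist_le q
        rw [Walk.length_cons] at hp
        omega
  have hinj : (S.erase x).card ≤ D.card := by
    apply Finset.card_le_card_of_injOn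
      (fun a => if h : ∃ b, s(a, b) ∈ D ∧ G'.dist b x < G'.dist a x
        then s(a, h.choose) else s(x, x))
    · intro a ha
      dsimp only
      rw [dif_pos (key a ha)]
      exact ((key a ha).choose_spec).1
    · intro a ha a' ha' hfa
      rw [Finset.mem_coe] at ha ha'
      dsimp only at hfa
      rw [dif_pos (key a ha), dif_pos (key a' ha')] at hfa
      have h1 := (key a ha).choose_spec
      have h2 := (key a' ha').choose_spec
      rw [Sym2.eq_iff] at hfa
      rcases hfa with ⟨rfl, -⟩ | ⟨h3, h4⟩
      · rfl
      · exfalso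
        rw [← h3, ← h4] at h2
        omega
  have := Finset.card_erase_of_mem hx
  have hpos : 0 < S.card := Finset.card_pos.mpr ⟨x, hx⟩
  omega

end SuvAux

/-- Let `G = (V, E)` be a finite graph of maximum degree 3, `u ≠ v`, and `A ∈ S_{u,v}(G)`
(i.e. exactly `u` and `v` have odd degree in `(V, A)`).  Then `u` and `v` lie in the same
connected component of `(V, A)`; every other connected component containing at least one
edge is a cycle; and the component containing `u` and `v` has cyclomatic number at most 2. -/
theorem suv_component_structure
    [Fintype V] [DecidableEq V] (G : SimpleGraph V) [DecidableRel G.Adj]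
    (hdeg : ∀ w, G.degree w ≤ 3)
    (u v : V) (huv : u ≠ v)
    (A : Finset (Sym2 V)) (hA : A ⊆ G.edgeFinset)
    (hu : Odd (degIn A u)) (hv : Odd (degIn A v))
    (heven : ∀ w, w ≠ u → w ≠ v → Even (degIn A w)) :
    (SimpleGraph.fromEdgeSet (A : Set (Sym2 V))).Reachable u v ∧
    (∀ w, ¬ (SimpleGraph.fromEdgeSet (A : Set (Sym2 V))).Reachable u w → degIn A w ≠ 0 →
      ∃ c : (SimpleGraph.fromEdgeSet (A : Set (Sym2 V))).Walk w w, c.IsCycle ∧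
        (∀ y, (SimpleGraph.fromEdgeSet (A : Set (Sym2 V))).Reachable w y ↔ y ∈ c.support) ∧
        c.edges.toFinset = componentEdges A w) ∧
    cyclomatic (componentEdges A u) ≤ 2 := by
  classical
  have hnd : ∀ e ∈ A, ¬ e.IsDiag := fun e he =>
    G.not_isDiag_of_mem_edgeSet (mem_edgeFinset.mp (hA he))
  have hdegIn3 : ∀ y, degIn A y ≤ 3 := by
    intro y
    have hsub : A.filter (fun e => y ∈ e) ⊆ G.incidenceFinset y := by
      intro e he'
      rw [mem_incidenceFinset]
      obtain ⟨h1, h2⟩ := Finset.mem_filter.mp he'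
      exact ⟨mem_edgeFinset.mp (hA h1), h2⟩
    calc degIn A y ≤ (G.incidenceFinset y).card := Finset.card_le_card hsub
    _ = G.degree y := G.card_incidenceFinset_eq_degree y
    _ ≤ 3 := hdeg y
  have hclosed : ∀ (r : V), ∀ e ∈ A, ∀ x ∈ e, ∀ y ∈ e,
      x ∈ Finset.univ.filter
        (fun t => (SimpleGraph.fromEdgeSet (A : Set (Sym2 V))).Reachable r t) →
      y ∈ Finset.univ.filter
        (fun t => (SimpleGraph.fromEdgeSet (A : Set (Sym2 V))).Reachable r t) := by
    intro r e he x hx y hy hxK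
    rw [Finset.mem_filter] at hxK ⊢
    refine ⟨Finset.mem_univ _, ?_⟩
    by_cases hxy : x = y
    · exact hxy ▸ hxK.2
    · exact hxK.2.trans (SuvAux.adj_of_mem_mem he hx hy hxy).reachable
  have hparity : ∀ (r z : V), (SimpleGraph.fromEdgeSet (A : Set (Sym2 V))).Reachable r z →
      Odd (degIn A z) →
      (∀ t, (SimpleGraph.fromEdgeSet (A : Set (Sym2 V))).Reachable r t → t ≠ z →
        Even (degIn A t)) → False := by
    intro r z hrz hodd hrest
    have hzK : z ∈ Finset.univ.filter
        (fun t => (SimpleGraph.fromEdgeSet (A : Set (Sym2 V))).Reachable r t) := by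
      simp [hrz]
    have heS := SuvAux.even_sum_degIn hnd _ (hclosed r)
    rw [← Finset.add_sum_erase _ _ hzK] at heS
    have htail : Even (∑ t ∈ (Finset.univ.filter
        (fun t => (SimpleGraph.fromEdgeSet (A : Set (Sym2 V))).Reachable r t)).erase z,
        degIn A t) := by
      apply Finset.even_sum
      intro t ht
      obtain ⟨htz, htK⟩ := Finset.mem_erase.mp ht
      rw [Finset.mem_filter] at htK
      exact hrest t htK.2 htz
    have hez : Even (degIn A z) := (Nat.even_add.mp heS).mpr htail
    exact (Nat.not_odd_iff_even.mpr hez) hodd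
  have claim1 : (SimpleGraph.fromEdgeSet (A : Set (Sym2 V))).Reachable u v := by
    by_contra hcon
    apply hparity u u (Reachable.refl u) hu
    intro t hut htu
    refine heven t htu fun h => hcon (h ▸ hut)
  refine ⟨claim1, ?_, ?_⟩
  · -- claim 2 : other components are cycles
    intro w hw hw0
    have hwv : ¬ (SimpleGraph.fromEdgeSet (A : Set (Sym2 V))).Reachable w v := by
      intro hwv
      apply hparity w v hwv hv
      intro t hwt htv
      refine heven t (fun h => hw ?_) htv
      exact (h ▸ hwt).symm
    have hdeg2 : ∀ y, (SimpleGraph.fromEdgeSet (A : Set (Sym2 V))).Reachable w y →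
        degIn A y = 2 := by
      intro y hy
      have hyu : y ≠ u := fun h => hw (h ▸ hy).symm
      have hyv : y ≠ v := fun h => hwv (h ▸ hy)
      have heY : Even (degIn A y) := heven y hyu hyv
      have hpos : degIn A y ≠ 0 := by
        by_cases hyw : y = w
        · exact hyw ▸ hw0
        · obtain ⟨p⟩ := hy.symm
          cases p with
          | nil => exact absurd rfl hyw
          | @cons _ m _ h q =>
            have h' := h
            rw [SimpleGraph.fromEdgeSet_adj] at h'
            have hmem : s(y, m) ∈ A.filter (fun e => y ∈ e) :=
              Finset.mem_filter.mpr ⟨by exact_mod_cast h'.1, by simp⟩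
            intro h0
            unfold degIn at h0
            rw [Finset.card_eq_zero.mp h0] at hmem
            simp at hmem
      have h3 := hdegIn3 y
      rw [Nat.even_iff] at heY
      omega
    -- maximal path from w
    have h0L : (0 : ℕ) ∈ {n | ∃ y : V,
        ∃ p : (SimpleGraph.fromEdgeSet (A : Set (Sym2 V))).Walk w y, p.IsPath ∧ p.length = n} :=
      ⟨w, Walk.nil, by simp, rfl⟩
    have hbdd : BddAbove {n | ∃ y : V,
        ∃ p : (SimpleGraph.fromEdgeSet (A : Set (Sym2 V))).Walk w y, p.IsPath ∧ p.length = n} := by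
      refine ⟨Fintype.card V, ?_⟩
      rintro n ⟨y, p, hp, rfl⟩
      exact le_of_lt hp.length_lt
    have hNL := Nat.sSup_mem ⟨0, h0L⟩ hbdd
    obtain ⟨y, p, hp, hplen⟩ := hNL
    have hdw := hdeg2 w (Reachable.refl w)
    obtain ⟨e₀, he₀A, hwe₀⟩ : ∃ e ∈ A, w ∈ e := by
      have hne : (A.filter (fun e => w ∈ e)).Nonempty := by
        rw [← Finset.card_pos]
        unfold degIn at hdw
        omega
      obtain ⟨e, he⟩ := hne
      exact ⟨e, (Finset.mem_filter.mp he).1, (Finset.mem_filter.mp he).2⟩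
    have hz₀ne : (Sym2.Mem.other hwe₀) ≠ w := Sym2.other_ne (hnd _ he₀A) hwe₀
    have hadj0 : (SimpleGraph.fromEdgeSet (A : Set (Sym2 V))).Adj w (Sym2.Mem.other hwe₀) :=
      SuvAux.adj_of_mem_mem he₀A hwe₀ (Sym2.other_mem hwe₀) hz₀ne.symm
    have h1L : (1 : ℕ) ∈ {n | ∃ y : V,
        ∃ p : (SimpleGraph.fromEdgeSet (A : Set (Sym2 V))).Walk w y, p.IsPath ∧ p.length = n} := by
      refine ⟨_, Walk.cons hadj0 Walk.nil, ?_, rfl⟩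
      rw [Walk.cons_isPath_iff]
      refine ⟨Walk.IsPath.nil, ?_⟩
      rw [Walk.support_nil, List.mem_singleton]
      exact fun h => hz₀ne h.symm
    have hlen1 : 1 ≤ p.length := by
      have := le_csSup hbdd h1L
      omega
    have hyw : y ≠ w := by
      rintro rfl
      rw [Walk.isPath_iff_eq_nil] at hp
      rw [hp] at hlen1
      simp at hlen1
    obtain ⟨z₁, hadj1, r₁, hr₁⟩ := Walk.exists_eq_cons_of_ne hyw p.reverse
    have hlast : s(y, z₁) ∈ p.edges := by
      have h1 : s(y, z₁) ∈ p.reverse.edges := by rw [hr₁]; simp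
      rwa [Walk.edges_reverse, List.mem_reverse] at h1
    have honly : ∀ e ∈ p.edges, y ∈ e → e = s(y, z₁) := by
      intro e he hye
      have h1 : e ∈ p.reverse.edges := by rwa [Walk.edges_reverse, List.mem_reverse]
      rw [hr₁, Walk.edges_cons] at h1
      rcases List.mem_cons.mp h1 with h1 | h1
      · exact h1
      · exfalso
        have hrev : p.reverse.IsPath := hp.reverse
        rw [hr₁, Walk.cons_isPath_iff] at hrev
        exact hrev.2 (SuvAux.mem_support_of_mem_edge h1 hye)
    have hlastA : s(y, z₁) ∈ A := (SuvAux.edge_mem_of_walk p hlast).1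
    have hdy := hdeg2 y ⟨p⟩
    have hEy : (A.filter (fun e => y ∈ e)).card = 2 := hdy
    have hlastEy : s(y, z₁) ∈ A.filter (fun e => y ∈ e) :=
      Finset.mem_filter.mpr ⟨hlastA, by simp⟩
    obtain ⟨e₂, he₂Ey, he₂ne⟩ :=
      Finset.exists_mem_ne (by rw [hEy]; norm_num) s(y, z₁)
    have he₂A : e₂ ∈ A := (Finset.mem_filter.mp he₂Ey).1
    have hye₂ : y ∈ e₂ := (Finset.mem_filter.mp he₂Ey).2
    obtain ⟨z, hzy, hze₂, hzmem⟩ : ∃ z, z ≠ y ∧ s(y, z) = e₂ ∧ z ∈ e₂ :=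
      ⟨Sym2.Mem.other hye₂, Sym2.other_ne (hnd _ he₂A) hye₂, Sym2.other_spec hye₂,
        Sym2.other_mem hye₂⟩
    have hadj2 : (SimpleGraph.fromEdgeSet (A : Set (Sym2 V))).Adj y z :=
      SuvAux.adj_of_mem_mem he₂A hye₂ hzmem (fun h => hzy h.symm)
    have he₂notp : e₂ ∉ p.edges := fun hin => he₂ne (honly e₂ hin hye₂)
    by_cases hzsup : z ∈ p.support
    · by_cases hzw : z = w
      · -- build the cycle
        subst hzw
        have hcyc : (Walk.cons hadj2.symm p.reverse).IsCycle := by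
          apply SimpleGraph.Path.cons_isCycle ⟨p.reverse, hp.reverse⟩ hadj2.symm
          intro hmem
          rw [Walk.edges_reverse, List.mem_reverse] at hmem
          have h1 : s(z, y) = s(y, z₁) := honly _ hmem (by simp)
          refine he₂ne ?_
          rw [← hze₂, Sym2.eq_swap]
          exact h1
        have hsupp : ∀ t, (SimpleGraph.fromEdgeSet (A : Set (Sym2 V))).Reachable z t ↔
            t ∈ (Walk.cons hadj2.symm p.reverse).support := by
          intro t
          constructor
          · intro hr
            by_contra htn
            obtain ⟨q⟩ := hr
            obtain ⟨x, x', hxS, hx'S, hadjx⟩ :=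
              SuvAux.escape q (Walk.start_mem_support _) htn
            have hxreach : (SimpleGraph.fromEdgeSet (A : Set (Sym2 V))).Reachable z x :=
              ⟨(Walk.cons hadj2.symm p.reverse).takeUntil x hxS⟩
            have hdx := hdeg2 x hxreach
            obtain ⟨g₁, hg₁, g₂, hg₂, hgne, hxg₁, hxg₂⟩ := SuvAux.cycle_two_edges hcyc hxS
            have hxx'A : s(x, x') ∈ A := by
              have h' := hadjx
              rw [SimpleGraph.fromEdgeSet_adj] at h'
              exact_mod_cast h'.1
            have hnotin : ∀ g ∈ (Walk.cons hadj2.symm p.reverse).edges, s(x, x') ≠ g := by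
              intro g hg hEq
              rw [← hEq] at hg
              exact hx'S (SuvAux.mem_support_of_mem_edge hg (by simp))
            have hsub : ({g₁, g₂, s(x, x')} : Finset (Sym2 V)) ⊆
                A.filter (fun e => x ∈ e) := by
              intro e he
              simp only [Finset.mem_insert, Finset.mem_singleton] at he
              rcases he with rfl | rfl | rfl
              · exact Finset.mem_filter.mpr ⟨(SuvAux.edge_mem_of_walk _ hg₁).1, hxg₁⟩
              · exact Finset.mem_filter.mpr ⟨(SuvAux.edge_mem_of_walk _ hg₂).1, hxg₂⟩
              · exact Finset.mem_filter.mpr ⟨hxx'A, by simp⟩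
            have hcard3 : ({g₁, g₂, s(x, x')} : Finset (Sym2 V)).card = 3 := by
              rw [Finset.card_insert_of_notMem, Finset.card_insert_of_notMem,
                Finset.card_singleton]
              · simp only [Finset.mem_singleton]
                exact fun h => hnotin g₂ hg₂ (by rw [h])
              · simp only [Finset.mem_insert, Finset.mem_singleton]
                push_neg
                exact ⟨hgne, fun h => hnotin g₁ hg₁ (by rw [h])⟩
            have hle := Finset.card_le_card hsub
            unfold degIn at hdx
            rw [hcard3, hdx] at hle
            omega
          · intro ht
            exact ⟨(Walk.cons hadj2.symm p.reverse).takeUntil t ht⟩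
        refine ⟨Walk.cons hadj2.symm p.reverse, hcyc, hsupp, ?_⟩
        have hmemCw : ∀ e, e ∈ componentEdges A z ↔ e ∈ A ∧ ∃ x ∈ e,
            (SimpleGraph.fromEdgeSet (A : Set (Sym2 V))).Reachable z x := by
          intro e
          unfold componentEdges
          rw [Finset.filter_congr_decidable]
          exact Finset.mem_filter
        ext e
        simp only [List.mem_toFinset]
        rw [hmemCw e]
        constructor
        · intro he
          obtain ⟨heA, hdiag⟩ := SuvAux.edge_mem_of_walk _ he
          refine ⟨heA, ?_⟩
          obtain ⟨xx, hxxe, hxxs⟩ := SuvAux.exists_mem_mem_support _ he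
          exact ⟨xx, hxxe, (hsupp xx).mpr hxxs⟩
        · rintro ⟨heA, xx, hxxe, hxxr⟩
          have hxxs := (hsupp xx).mp hxxr
          have hdx := hdeg2 xx hxxr
          obtain ⟨g₁, hg₁, g₂, hg₂, hgne, hxg₁, hxg₂⟩ := SuvAux.cycle_two_edges hcyc hxxs
          have hsub : ({g₁, g₂} : Finset (Sym2 V)) ⊆ A.filter (fun e => xx ∈ e) := by
            intro f hf
            simp only [Finset.mem_insert, Finset.mem_singleton] at hf
            rcases hf with rfl | rfl
            · exact Finset.mem_filter.mpr ⟨(SuvAux.edge_mem_of_walk _ hg₁).1, hxg₁⟩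
            · exact Finset.mem_filter.mpr ⟨(SuvAux.edge_mem_of_walk _ hg₂).1, hxg₂⟩
          have hcard2 : ({g₁, g₂} : Finset (Sym2 V)).card = 2 := by
            rw [Finset.card_insert_of_notMem (by simp [hgne]), Finset.card_singleton]
          have hEq : A.filter (fun e => xx ∈ e) = {g₁, g₂} := by
            refine (Finset.eq_of_subset_of_card_le hsub ?_).symm
            unfold degIn at hdx
            rw [hcard2, hdx]
          have heEx : e ∈ A.filter (fun e => xx ∈ e) := Finset.mem_filter.mpr ⟨heA, hxxe⟩
          rw [hEq] at heEx
          simp only [Finset.mem_insert, Finset.mem_singleton] at heEx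
          rcases heEx with rfl | rfl
          · exact hg₁
          · exact hg₂
      · -- interior vertex contradiction
        exfalso
        obtain ⟨f₁, hf₁, f₂, hf₂, hfne, hzf₁, hzf₂⟩ :=
          SuvAux.two_edges_of_interior p hp hzsup hzw hzy
        have hdz := hdeg2 z ⟨p.takeUntil z hzsup⟩
        have hsub : ({f₁, f₂, e₂} : Finset (Sym2 V)) ⊆ A.filter (fun e => z ∈ e) := by
          intro f hf
          simp only [Finset.mem_insert, Finset.mem_singleton] at hf
          rcases hf with rfl | rfl | rfl
          · exact Finset.mem_filter.mpr ⟨(SuvAux.edge_mem_of_walk p hf₁).1, hzf₁⟩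
          · exact Finset.mem_filter.mpr ⟨(SuvAux.edge_mem_of_walk p hf₂).1, hzf₂⟩
          · exact Finset.mem_filter.mpr ⟨he₂A, hzmem⟩
        have hcard3 : ({f₁, f₂, e₂} : Finset (Sym2 V)).card = 3 := by
          rw [Finset.card_insert_of_notMem, Finset.card_insert_of_notMem,
            Finset.card_singleton]
          · simp only [Finset.mem_singleton]
            exact fun h => he₂notp (h ▸ hf₂)
          · simp only [Finset.mem_insert, Finset.mem_singleton]
            push_neg
            exact ⟨hfne, fun h => he₂notp (h ▸ hf₁)⟩
        have hle := Finset.card_le_card hsub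
        unfold degIn at hdz
        rw [hcard3, hdz] at hle
        omega
    · -- extension contradiction
      exfalso
      have hcq : (p.concat hadj2).IsPath := by
        rw [← Walk.isPath_reverse_iff, Walk.reverse_concat, Walk.cons_isPath_iff]
        exact ⟨hp.reverse, by rwa [Walk.support_reverse, List.mem_reverse]⟩
      have hmem : p.length + 1 ∈ {n | ∃ y : V,
          ∃ p : (SimpleGraph.fromEdgeSet (A : Set (Sym2 V))).Walk w y,
            p.IsPath ∧ p.length = n} :=
        ⟨z, p.concat hadj2, hcq, by rw [Walk.length_concat]⟩
      have := le_csSup hbdd hmem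
      omega
  · -- claim 3 : cyclomatic number at most 2
    have hmemC : ∀ e, e ∈ componentEdges A u ↔ e ∈ A ∧ ∃ x ∈ e,
        (SimpleGraph.fromEdgeSet (A : Set (Sym2 V))).Reachable u x := by
      intro e
      unfold componentEdges
      rw [Finset.filter_congr_decidable]
      exact Finset.mem_filter
    have hCsubA : componentEdges A u ⊆ A := fun e he => ((hmemC e).mp he).1
    have hfilter_eq : ∀ y, (SimpleGraph.fromEdgeSet (A : Set (Sym2 V))).Reachable u y →
        A.filter (fun e => y ∈ e) = (componentEdges A u).filter (fun e => y ∈ e) := by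
      intro y hy
      ext e
      simp only [Finset.mem_filter]
      constructor
      · rintro ⟨heA, hye⟩
        exact ⟨(hmemC e).mpr ⟨heA, y, hye, hy⟩, hye⟩
      · rintro ⟨heC, hye⟩
        exact ⟨hCsubA heC, hye⟩
    have hend2 : ∀ e ∈ componentEdges A u,
        ((Finset.univ.filter (fun t =>
          (SimpleGraph.fromEdgeSet (A : Set (Sym2 V))).Reachable u t)).filter
            (fun t => t ∈ e)).card = 2 := by
      intro e he
      obtain ⟨heA, x, hxe, hxr⟩ := (hmemC e).mp he
      have hall : ∀ t ∈ e, (SimpleGraph.fromEdgeSet (A : Set (Sym2 V))).Reachable u t := by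
        intro t hte
        by_cases hxt : x = t
        · exact hxt ▸ hxr
        · exact hxr.trans (SuvAux.adj_of_mem_mem heA hxe hte hxt).reachable
      clear hxe hxr he
      revert heA hall
      induction e using Sym2.ind with
      | _ a b =>
        intro heA hall
        have hab : a ≠ b := fun h => hnd _ heA (by simp [h])
        have hfa : (Finset.univ.filter (fun t =>
            (SimpleGraph.fromEdgeSet (A : Set (Sym2 V))).Reachable u t)).filter
              (fun t => t ∈ s(a, b)) = {a, b} := by
          ext t
          simp only [Finset.mem_filter, Finset.mem_univ, true_and, Sym2.mem_iff,
            Finset.mem_insert, Finset.mem_singleton]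
          constructor
          · tauto
          · rintro (rfl | rfl)
            · exact ⟨hall t (by simp), Or.inl rfl⟩
            · exact ⟨hall t (by simp), Or.inr rfl⟩
        rw [hfa, Finset.card_insert_of_notMem (by simp [hab]), Finset.card_singleton]
    have hsum2 : ∑ t ∈ Finset.univ.filter (fun t =>
        (SimpleGraph.fromEdgeSet (A : Set (Sym2 V))).Reachable u t),
          degIn (componentEdges A u) t = 2 * (componentEdges A u).card := by
      have hswap : ∑ t ∈ Finset.univ.filter (fun t =>
          (SimpleGraph.fromEdgeSet (A : Set (Sym2 V))).Reachable u t),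
            degIn (componentEdges A u) t
          = ∑ e ∈ componentEdges A u, ((Finset.univ.filter (fun t =>
              (SimpleGraph.fromEdgeSet (A : Set (Sym2 V))).Reachable u t)).filter
                (fun t => t ∈ e)).card := by
        unfold degIn
        simp_rw [Finset.card_filter]
        rw [Finset.sum_comm]
      rw [hswap, Finset.sum_congr rfl hend2, Finset.sum_const, smul_eq_mul, mul_comm]
    have hdEq : ∀ t ∈ Finset.univ.filter (fun t =>
        (SimpleGraph.fromEdgeSet (A : Set (Sym2 V))).Reachable u t),
        degIn (componentEdges A u) t = degIn A t := by
      intro t ht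
      rw [Finset.mem_filter] at ht
      have := hfilter_eq t ht.2
      unfold degIn
      rw [← this]
    have huS : u ∈ Finset.univ.filter (fun t =>
        (SimpleGraph.fromEdgeSet (A : Set (Sym2 V))).Reachable u t) :=
      Finset.mem_filter.mpr ⟨Finset.mem_univ _, Reachable.refl u⟩
    have hvS : v ∈ Finset.univ.filter (fun t =>
        (SimpleGraph.fromEdgeSet (A : Set (Sym2 V))).Reachable u t) :=
      Finset.mem_filter.mpr ⟨Finset.mem_univ _, claim1⟩
    have hvS' : v ∈ (Finset.univ.filter (fun t =>
        (SimpleGraph.fromEdgeSet (A : Set (Sym2 V))).Reachable u t)).erase u :=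
      Finset.mem_erase.mpr ⟨Ne.symm huv, hvS⟩
    have hsum_le : ∑ t ∈ Finset.univ.filter (fun t =>
        (SimpleGraph.fromEdgeSet (A : Set (Sym2 V))).Reachable u t), degIn A t ≤
        2 * (Finset.univ.filter (fun t =>
          (SimpleGraph.fromEdgeSet (A : Set (Sym2 V))).Reachable u t)).card + 2 := by
      rw [← Finset.add_sum_erase _ _ huS, ← Finset.add_sum_erase _ _ hvS']
      have htail : ∑ t ∈ ((Finset.univ.filter (fun t =>
          (SimpleGraph.fromEdgeSet (A : Set (Sym2 V))).Reachable u t)).erase u).erase v,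
            degIn A t ≤ (((Finset.univ.filter (fun t =>
          (SimpleGraph.fromEdgeSet (A : Set (Sym2 V))).Reachable u t)).erase u).erase v).card
            * 2 := by
        apply Finset.sum_le_card_nsmul
        intro t ht
        obtain ⟨htv, ht'⟩ := Finset.mem_erase.mp ht
        obtain ⟨htu, -⟩ := Finset.mem_erase.mp ht'
        have h1 := heven t htu htv
        have h2 := hdegIn3 t
        rw [Nat.even_iff] at h1
        omega
      have hcard : (((Finset.univ.filter (fun t =>
          (SimpleGraph.fromEdgeSet (A : Set (Sym2 V))).Reachable u t)).erase u).erase v).card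
          = (Finset.univ.filter (fun t =>
            (SimpleGraph.fromEdgeSet (A : Set (Sym2 V))).Reachable u t)).card - 2 := by
        rw [Finset.card_erase_of_mem hvS', Finset.card_erase_of_mem huS]
        omega
      have h2le : 2 ≤ (Finset.univ.filter (fun t =>
          (SimpleGraph.fromEdgeSet (A : Set (Sym2 V))).Reachable u t)).card := by
        have := Finset.one_lt_card.mpr ⟨u, huS, v, hvS, huv⟩
        omega
      have h3u := hdegIn3 u
      have h3v := hdegIn3 v
      omega
    have hsumA : ∑ t ∈ Finset.univ.filter (fun t =>
        (SimpleGraph.fromEdgeSet (A : Set (Sym2 V))).Reachable u t), degIn A t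
        = 2 * (componentEdges A u).card := by
      rw [← hsum2]
      exact (Finset.sum_congr rfl hdEq).symm
    have hm_le : (componentEdges A u).card ≤ (Finset.univ.filter (fun t =>
        (SimpleGraph.fromEdgeSet (A : Set (Sym2 V))).Reachable u t)).card + 1 := by
      omega
    obtain ⟨B, hBsub, hBac, hBreach⟩ := SuvAux.exists_acyclic_sdiff (componentEdges A u)
    have hcyc_le : cyclomatic (componentEdges A u) ≤ B.card :=
      Nat.sInf_le ⟨B, hBsub, rfl, hBac⟩
    have htrans : ∀ a ∈ Finset.univ.filter (fun t =>
        (SimpleGraph.fromEdgeSet (A : Set (Sym2 V))).Reachable u t),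
        (SimpleGraph.fromEdgeSet
          ((componentEdges A u \ B : Finset (Sym2 V)) : Set (Sym2 V))).Reachable a u := by
      intro a ha
      rw [Finset.mem_filter] at ha
      obtain ⟨p⟩ := ha.2
      have hpe : ∀ e ∈ p.edges, e ∈ (SimpleGraph.fromEdgeSet
          ((componentEdges A u : Finset (Sym2 V)) : Set (Sym2 V))).edgeSet := by
        intro e he
        obtain ⟨heA, hdiag⟩ := SuvAux.edge_mem_of_walk p he
        have heC : e ∈ componentEdges A u := by
          refine (hmemC e).mpr ⟨heA, ?_⟩
          obtain ⟨xx, hxxe, hxxs⟩ := SuvAux.exists_mem_mem_support p he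
          exact ⟨xx, hxxe, ⟨p.takeUntil xx hxxs⟩⟩
        rw [edgeSet_fromEdgeSet]
        exact ⟨by exact_mod_cast heC, hdiag⟩
      exact (hBreach u a ⟨p.transfer _ hpe⟩).symm
    have hcount := SuvAux.card_le_of_connected (componentEdges A u \ B) _ u huS htrans
    have hsplit := Finset.card_sdiff_add_card_eq_card hBsub
    omega
end

section
/- Let G=(V,E) be a finite graph of maximum degree 3, let n be a positive integer, let x be a real number, and let μ be a probability measure on R^n whose moments satisfy E[s^α]=0, E[s^α s^β]=δ_{αβ}/n, and E[s^α s^β s^γ]=0 for all component indices α,β,γ. If (s_i)_{i∈V} are i.i.d. with law μ, then E[∏_{ij∈E}(1 + n x s_i·s_j)] = Σ_{A∈C(G)} n^{c(A)} x^{|A|}. -/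
open SimpleGraph MeasureTheory

variable {V : Type*}

namespace LoopExp

def touches (e f : Sym2 V) : Prop := ∃ v, v ∈ e ∧ v ∈ f

def stA (A : Finset (Sym2 V)) : Setoid {e // e ∈ A} :=
  ⟨Relation.ReflTransGen (fun a b => touches a.1 b.1),
   fun _ => Relation.ReflTransGen.refl,
   fun h => (@Relation.ReflTransGen.stdSymm _ _
      ⟨fun _ _ ⟨v, h1, h2⟩ => ⟨v, h2, h1⟩⟩).symm _ _ h,
   fun h h' => Relation.ReflTransGen.trans h h'⟩

variable [Fintype V] [DecidableEq V]

lemma filter_mem_sym2 (i j : V) :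
    (Finset.univ.filter fun v => v ∈ s(i, j)) = {i, j} := by
  ext v; simp [Sym2.mem_iff]

lemma card_filter_mem {e : Sym2 V} (he : ¬ e.IsDiag) :
    (Finset.univ.filter fun v => v ∈ e).card = 2 := by
  induction e with
  | _ i j =>
    rw [Sym2.isDiag_iff_proj_eq] at he
    rw [filter_mem_sym2 i j, Finset.card_insert_of_notMem (by simp [he]),
      Finset.card_singleton]

/-- handshake -/
lemma sum_degIn {A : Finset (Sym2 V)} (hnd : ∀ e ∈ A, ¬ e.IsDiag) :
    ∑ v, degIn A v = 2 * A.card := by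
  unfold degIn
  simp only [Finset.card_filter]
  rw [Finset.sum_comm]
  rw [Finset.sum_congr rfl (fun e he => ?_), Finset.sum_const, smul_eq_mul, mul_comm]
  rw [← Finset.card_filter]
  exact card_filter_mem (hnd e he)

lemma degIn_le_degree (G : SimpleGraph V) [DecidableRel G.Adj] {A : Finset (Sym2 V)}
    (hA : A ⊆ G.edgeFinset) (v : V) : degIn A v ≤ G.degree v := by
  rw [← SimpleGraph.card_incidenceFinset_eq_degree, SimpleGraph.incidenceFinset_eq_filter]
  exact Finset.card_le_card (Finset.filter_subset_filter _ hA)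


lemma cycle_edge_closed {H : SimpleGraph V} {u : V} {c : H.Walk u u} (hc : c.IsCycle)
    {A : Finset (Sym2 V)} (hsub : ∀ f ∈ c.edges, f ∈ A) {v : V}
    (hd2 : degIn A v = 2) {e e' : Sym2 V} (he : e ∈ c.edges) (hv : v ∈ e)
    (he' : e' ∈ A) (hv' : v ∈ e') : e' ∈ c.edges := by
  have htrail : c.IsTrail := hc.isTrail
  have hnodup : c.edges.Nodup := htrail.edges_nodup
  have heven : Even (c.edges.countP fun f => decide (v ∈ f)) :=
    (htrail.even_countP_edges_iff v).2 (fun h => absurd rfl h)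
  set T : Finset (Sym2 V) := c.edges.toFinset.filter (fun f => v ∈ f) with hT
  have hcard : T.card = c.edges.countP fun f => decide (v ∈ f) := by
    rw [List.countP_eq_length_filter, hT]
    have h := List.toFinset_filter c.edges (fun f => decide (v ∈ f))
    simp only [decide_eq_true_eq] at h
    rw [← h]
    exact List.toFinset_card_of_nodup (hnodup.filter _)
  have hTsub : T ⊆ A.filter (fun f => v ∈ f) := by
    intro f hf
    simp only [hT, Finset.mem_filter, List.mem_toFinset] at hf ⊢
    exact ⟨hsub f hf.1, hf.2⟩
  have heT : e ∈ T := by simp [hT, List.mem_toFinset, he, hv]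
  have hTpos : 0 < T.card := Finset.card_pos.2 ⟨e, heT⟩
  have hT2 : 2 ≤ T.card := by
    rcases (hcard ▸ heven) with ⟨k, hk⟩
    omega
  have hTeq : T = A.filter (fun f => v ∈ f) := by
    apply Finset.eq_of_subset_of_card_le hTsub
    have : (A.filter (fun f => v ∈ f)).card = 2 := hd2
    omega
  have : e' ∈ T := by rw [hTeq]; exact Finset.mem_filter.2 ⟨he', hv'⟩
  simpa [hT, List.mem_toFinset] using (Finset.mem_filter.1 this).1

lemma cycle_closed_rtg {H : SimpleGraph V} {u : V} {c : H.Walk u u} (hc : c.IsCycle)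
    {A : Finset (Sym2 V)} (hsub : ∀ f ∈ c.edges, f ∈ A)
    (hd2 : ∀ v (e : Sym2 V), e ∈ A → v ∈ e → degIn A v = 2)
    {a b : {e // e ∈ A}}
    (hab : Relation.ReflTransGen (fun a b : {e // e ∈ A} => ∃ v, v ∈ a.1 ∧ v ∈ b.1) a b)
    (ha : a.1 ∈ c.edges) : b.1 ∈ c.edges := by
  induction hab with
  | refl => exact ha
  | tail _ hstep ih =>
    obtain ⟨v, hv1, hv2⟩ := hstep
    exact cycle_edge_closed hc hsub (hd2 v _ (by simp) hv1) ih hv1 (by simp) hv2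


lemma card_toFinset_filter {α : Type*} [DecidableEq α] {l : List α} (h : l.Nodup)
    (p : α → Prop) [DecidablePred p] :
    (l.toFinset.filter p).card = l.countP (fun a => decide (p a)) := by
  rw [List.countP_eq_length_filter]
  have h' := List.toFinset_filter l (fun a => decide (p a))
  simp only [decide_eq_true_eq] at h'
  rw [← h']
  exact List.toFinset_card_of_nodup (h.filter _)

lemma exists_cycle_of_class_avoids [Fintype V]
    {A B : Finset (Sym2 V)} (hnd : ∀ e ∈ A, ¬ e.IsDiag)
    (hd2 : ∀ v (e : Sym2 V), e ∈ A → v ∈ e → degIn A v = 2)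
    {e0 : Sym2 V} (he0 : e0 ∈ A)
    (havoid : ∀ (f : Sym2 V) (hf : f ∈ A),
      Relation.ReflTransGen (fun a b : {e // e ∈ A} => ∃ v, v ∈ a.1 ∧ v ∈ b.1)
        ⟨e0, he0⟩ ⟨f, hf⟩ → f ∉ B) :
    ∃ (v : V) (c : (fromEdgeSet ((A \ B : Finset (Sym2 V)) : Set (Sym2 V))).Walk v v),
      c.IsCycle := by
  set H := fromEdgeSet ((A \ B : Finset (Sym2 V)) : Set (Sym2 V)) with hH
  set Cl : Sym2 V → Prop := fun f => ∃ hf : f ∈ A,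
    Relation.ReflTransGen (fun a b : {e // e ∈ A} => ∃ v, v ∈ a.1 ∧ v ∈ b.1)
      ⟨e0, he0⟩ ⟨f, hf⟩ with hCl
  have hClA : ∀ f, Cl f → f ∈ A := fun f hf => hf.1
  have hClAB : ∀ f, Cl f → f ∈ ((A \ B : Finset (Sym2 V)) : Set (Sym2 V)) := by
    rintro f ⟨hf, hr⟩
    simp only [Finset.coe_sdiff, Set.mem_diff, Finset.mem_coe]
    exact ⟨hf, havoid f hf hr⟩
  have hClstep : ∀ f v e', Cl f → v ∈ f → e' ∈ A → v ∈ e' → Cl e' := by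
    rintro f v e' ⟨hf, hr⟩ hvf he' hve'
    exact ⟨he', hr.tail ⟨v, hvf, hve'⟩⟩
  -- the set of lengths of paths with all edges of class Cl
  set P : Set ℕ := {ℓ | ∃ (a b : V) (p : H.Walk a b), p.IsPath ∧
    (∀ f ∈ p.edges, Cl f) ∧ p.length = ℓ} with hP
  have hCladj : ∀ (a b : V), Cl s(a, b) → H.Adj a b := by
    intro a b hc
    rw [hH, fromEdgeSet_adj]
    refine ⟨hClAB _ hc, ?_⟩
    intro hab
    exact hnd _ (hClA _ hc) (by rw [hab]; exact Sym2.isDiag_iff_proj_eq.2 rfl)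
  have h1P : 1 ∈ P := by
    induction e0 with
    | _ a b =>
      have hcl0 : Cl s(a, b) := ⟨he0, Relation.ReflTransGen.refl⟩
      have hadj : H.Adj a b := hCladj a b hcl0
      refine ⟨a, b, Walk.cons hadj Walk.nil, ?_, ?_, rfl⟩
      · simp [Walk.cons_isPath_iff, hadj.ne]
      · intro f hf
        simp only [Walk.edges_cons, Walk.edges_nil, List.mem_singleton] at hf
        rwa [hf]
  have hbdd : BddAbove P := by
    refine ⟨Fintype.card V, ?_⟩
    rintro ℓ ⟨a, b, p, hp, -, rfl⟩
    exact hp.length_lt.le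
  have hLmem := Nat.sSup_mem ⟨1, h1P⟩ hbdd
  set L := sSup P with hLdef
  obtain ⟨u, v, p, hp, hcl, hlen⟩ := hLmem
  have hL1 : 1 ≤ L := le_csSup hbdd h1P
  have hvu : v ≠ u := by
    rintro rfl
    rw [Walk.isPath_iff_eq_nil] at hp
    subst hp
    simp at hlen
    omega
  set q := p.reverse with hq
  have hqpath : q.IsPath := hp.reverse
  have hqcl : ∀ f ∈ q.edges, Cl f := by
    intro f hf
    rw [hq, Walk.edges_reverse, List.mem_reverse] at hf
    exact hcl f hf
  obtain ⟨w, hadj, q', hq'⟩ := Walk.exists_eq_cons_of_ne hvu q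
  have hfq : s(v, w) ∈ q.edges := by rw [hq']; simp
  have hClf : Cl s(v, w) := hqcl _ hfq
  have hfA : s(v, w) ∈ A := hClA _ hClf
  -- the other edge at v
  have hdv : degIn A v = 2 := hd2 v _ hfA (by simp)
  have hmemAv : s(v, w) ∈ A.filter (fun f => v ∈ f) := by simp [hfA]
  have : 0 < ((A.filter (fun f => v ∈ f)).erase s(v, w)).card := by
    rw [Finset.card_erase_of_mem hmemAv]
    have : (A.filter (fun f => v ∈ f)).card = 2 := hdv
    omega
  obtain ⟨f', hf'⟩ := Finset.card_pos.1 this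
  obtain ⟨hf'ne, hf'Av⟩ := Finset.mem_erase.1 hf'
  have hf'A : f' ∈ A := (Finset.mem_filter.1 hf'Av).1
  have hvf' : v ∈ f' := (Finset.mem_filter.1 hf'Av).2
  have hClf' : Cl f' := hClstep _ v _ hClf (by simp) hf'A hvf'
  obtain ⟨w', hw'eq⟩ := Sym2.mem_iff_exists.1 hvf'
  subst hw'eq
  have hvw' : v ≠ w' := by
    intro h
    exact hnd _ hf'A (by rw [← h]; exact Sym2.isDiag_iff_proj_eq.2 rfl)
  by_cases hcase : s(v, w') ∈ q.edges
  · -- endpoint would have odd A-edge count among path edges: contradiction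
    exfalso
    have hodd : ¬ Even (q.edges.countP fun f => decide (v ∈ f)) := by
      rw [hqpath.isTrail.even_countP_edges_iff v]
      push_neg
      exact ⟨hvu, fun h => absurd rfl h⟩
    apply hodd
    have hnodup : q.edges.Nodup := hqpath.isTrail.edges_nodup
    have hcardT : (q.edges.toFinset.filter (fun f => v ∈ f)).card
        = q.edges.countP fun f => decide (v ∈ f) := card_toFinset_filter hnodup _
    have hTsub : q.edges.toFinset.filter (fun f => v ∈ f) ⊆ A.filter (fun f => v ∈ f) := by
      intro f hf
      simp only [Finset.mem_filter, List.mem_toFinset] at hf ⊢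
      exact ⟨hClA _ (hqcl f hf.1), hf.2⟩
    have h1 : s(v, w) ∈ q.edges.toFinset.filter (fun f => v ∈ f) := by
      simp [List.mem_toFinset, hfq]
    have h2 : s(v, w') ∈ q.edges.toFinset.filter (fun f => v ∈ f) := by
      simp [List.mem_toFinset, hcase]
    have hge : 2 ≤ (q.edges.toFinset.filter (fun f => v ∈ f)).card := by
      have := Finset.one_lt_card.2 ⟨_, h1, _, h2, fun h => hf'ne h.symm⟩
      omega
    have hle : (q.edges.toFinset.filter (fun f => v ∈ f)).card ≤ 2 := by
      have h2' : (A.filter (fun f => v ∈ f)).card = 2 := hdv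
      have := Finset.card_le_card hTsub
      omega
    rw [← hcardT]
    have : (q.edges.toFinset.filter (fun f => v ∈ f)).card = 2 := le_antisymm hle hge
    rw [this]
    exact even_two
  · have hadj' : H.Adj v w' := hCladj v w' hClf'
    by_cases hw's : w' ∈ q.support
    · -- construct a cycle
      refine ⟨w', Walk.cons hadj'.symm (q.takeUntil w' hw's), ?_⟩
      rw [Walk.cons_isCycle_iff]
      refine ⟨hqpath.takeUntil hw's, ?_⟩
      intro hmem
      have := Walk.edges_takeUntil_subset q hw's hmem
      rw [Sym2.eq_swap] at this
      exact hcase this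
    · -- extend the path: contradiction with maximality
      exfalso
      have hp' : (Walk.cons hadj'.symm q).IsPath := by
        rw [Walk.cons_isPath_iff]
        exact ⟨hqpath, hw's⟩
      have hmem : L + 1 ∈ P := by
        refine ⟨w', u, Walk.cons hadj'.symm q, hp', ?_, ?_⟩
        · intro f hf
          simp only [Walk.edges_cons, List.mem_cons] at hf
          rcases hf with rfl | hf
          · rwa [Sym2.eq_swap]
          · exact hqcl f hf
        · simp only [Walk.length_cons]
          rw [hq, Walk.length_reverse, hlen]
      have := le_csSup hbdd hmem
      omega


theorem cyclomatic_eq [Fintype V] {A : Finset (Sym2 V)}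
    (hnd : ∀ e ∈ A, ¬ e.IsDiag)
    (hd2 : ∀ v (e : Sym2 V), e ∈ A → v ∈ e → degIn A v = 2) :
    cyclomatic A = Nat.card (Quotient (stA A)) := by
  classical
  letI : Fintype (Quotient (stA A)) := Fintype.ofFinite _
  rw [Nat.card_eq_fintype_card]
  set K := Fintype.card (Quotient (stA A)) with hK
  set B := Finset.image (fun x : Quotient (stA A) => (Quotient.out x).1) Finset.univ with hB
  -- membership witness
  have hmemK : K ∈ {k | ∃ B ⊆ A, B.card = k ∧
      (SimpleGraph.fromEdgeSet ((A \ B : Finset (Sym2 V)) : Set (Sym2 V))).IsAcyclic} := by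
    refine ⟨B, ?_, ?_, ?_⟩
    · intro f hf
      rw [hB] at hf
      simp only [Finset.mem_image] at hf
      obtain ⟨x, -, rfl⟩ := hf
      exact x.out.2
    · rw [hB, Finset.card_image_of_injective _ (fun x y h => Quotient.out_inj.1 (Subtype.ext h)),
        Finset.card_univ]
    · intro v c hc
      have hsub : ∀ f ∈ c.edges, f ∈ A \ B := by
        intro f hf
        have := c.edges_subset_edgeSet hf
        rw [edgeSet_fromEdgeSet] at this
        simpa using this.1
      have hsubA : ∀ f ∈ c.edges, f ∈ A := fun f hf => (Finset.mem_sdiff.1 (hsub f hf)).1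
      have hne : c.edges ≠ [] := by
        have h3 := hc.three_le_length
        intro h
        rw [← Walk.length_edges, h] at h3
        simp at h3
      obtain ⟨e1, he1⟩ := List.exists_mem_of_ne_nil _ hne
      have he1A : e1 ∈ A := hsubA e1 he1
      set x : Quotient (stA A) := ⟦⟨e1, he1A⟩⟧ with hx
      have hrtg : Relation.ReflTransGen
          (fun a b : {e // e ∈ A} => ∃ v, v ∈ a.1 ∧ v ∈ b.1) ⟨e1, he1A⟩ x.out :=
        Quotient.exact (x.out_eq.symm)
      have hmem : (x.out).1 ∈ c.edges := cycle_closed_rtg hc hsubA hd2 hrtg he1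
      have : (x.out).1 ∈ A \ B := hsub _ hmem
      have hBmem : (x.out).1 ∈ B := Finset.mem_image.2 ⟨x, Finset.mem_univ _, rfl⟩
      exact (Finset.mem_sdiff.1 this).2 hBmem
  refine le_antisymm (Nat.sInf_le hmemK) (le_csInf ⟨K, hmemK⟩ ?_)
  rintro k ⟨B, hBA, rfl, hac⟩
  -- every class contains an edge of B
  have hhit : ∀ x : Quotient (stA A), ∃ f, ∃ hfB : f ∈ B, ∃ hf : f ∈ A, ⟦⟨f, hf⟩⟧ = x := by
    intro x
    induction x using Quotient.inductionOn with
    | h a =>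
      obtain ⟨e0, he0⟩ := a
      by_contra hcon
      push_neg at hcon
      have havoid : ∀ (f : Sym2 V) (hf : f ∈ A),
          Relation.ReflTransGen (fun a b : {e // e ∈ A} => ∃ v, v ∈ a.1 ∧ v ∈ b.1)
            ⟨e0, he0⟩ ⟨f, hf⟩ → f ∉ B := by
        intro f hf hr hfB
        exact hcon f hfB hf (Quotient.sound ((stA A).symm hr))
      obtain ⟨v, c, hc⟩ := exists_cycle_of_class_avoids hnd hd2 he0 havoid
      exact hac c hc
  choose g hgB hgA hgq using hhit
  have hinj : Function.Injective (fun x : Quotient (stA A) => (⟨g x, hgB x⟩ : {f // f ∈ B})) := by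
    intro x y h
    have : g x = g y := congrArg Subtype.val h
    rw [← hgq x, ← hgq y]
    congr 1
    exact Subtype.ext this
  calc K ≤ Fintype.card {f // f ∈ B} := Fintype.card_le_of_injective _ hinj
    _ = B.card := Fintype.card_coe B


noncomputable def validEquiv (A : Finset (Sym2 V)) (n : ℕ) :
    (Quotient (stA A) → Fin n) ≃
      {c : {e // e ∈ A} → Fin n // ∀ a b, touches a.1 b.1 → c a = c b} where
  toFun f := ⟨fun a => f ⟦a⟧, fun a b h =>
    congrArg f (Quotient.sound (Relation.ReflTransGen.single h))⟩
  invFun c := Quotient.lift c.1 (fun a b h => by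
    induction h with
    | refl => rfl
    | tail _ step ih => exact ih.trans (c.2 _ _ step))
  left_inv f := by
    funext x
    induction x using Quotient.inductionOn with
    | h a => rfl
  right_inv c := by
    apply Subtype.ext
    funext a
    rfl

theorem card_valid [DecidableEq V] (A : Finset (Sym2 V)) (n : ℕ)
    (p : ({e // e ∈ A} → Fin n) → Prop) [DecidablePred p]
    (hp : ∀ c, p c ↔ ∀ a b, touches a.1 b.1 → c a = c b) :
    (Finset.univ.filter p).card = n ^ Nat.card (Quotient (stA A)) := by
  classical
  letI : Fintype (Quotient (stA A)) := Fintype.ofFinite _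
  have h1 : (Finset.univ.filter p).card = Fintype.card {c // p c} :=
    (Fintype.card_subtype p).symm
  have h2 : Fintype.card {c // p c} = Fintype.card (Quotient (stA A) → Fin n) :=
    Fintype.card_congr ((Equiv.subtypeEquivRight hp).trans (validEquiv A n).symm)
  rw [h1, h2, Fintype.card_fun, Fintype.card_fin, Nat.card_eq_fintype_card]

-- measure theory helpers
lemma my_integrable_pi {ι E : Type*} [Fintype ι] [MeasurableSpace E]
    (μ : Measure E) [SigmaFinite μ] {f : ι → E → ℝ} (hf : ∀ i, Integrable (f i) μ) :
    Integrable (fun x : ι → E => ∏ i, f i (x i)) (Measure.pi fun _ => μ) := by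
  letI : MeasureSpace E := ⟨μ⟩
  have h := MeasureTheory.Integrable.fintype_prod (𝕜 := ℝ) (f := f) hf
  exact h

lemma my_integral_pi {ι E : Type*} [Fintype ι] [MeasurableSpace E]
    (μ : Measure E) [SigmaFinite μ] (f : ι → E → ℝ) :
    ∫ x : ι → E, ∏ i, f i (x i) ∂(Measure.pi fun _ => μ) = ∏ i, ∫ x, f i x ∂μ := by
  letI : MeasureSpace E := ⟨μ⟩
  have h := MeasureTheory.integral_fintype_prod_eq_prod (𝕜 := ℝ) (ι := ι) f (μ := fun _ => μ)
  exact h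

lemma moments_integrable {n : ℕ} {μ : Measure (Fin n → ℝ)} [IsProbabilityMeasure μ]
    {ι : Type*} [DecidableEq ι]
    (hint1 : ∀ α, Integrable (fun s : Fin n → ℝ => s α) μ)
    (hint2 : ∀ α β, Integrable (fun s : Fin n → ℝ => s α * s β) μ)
    (hint3 : ∀ α β γ, Integrable (fun s : Fin n → ℝ => s α * s β * s γ) μ)
    (S : Finset ι) (hS : S.card ≤ 3) (γ : ι → Fin n) :
    Integrable (fun t : Fin n → ℝ => ∏ e ∈ S, t (γ e)) μ := by
  interval_cases h : S.card
  · rw [Finset.card_eq_zero] at h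
    subst h
    simpa using integrable_const (1 : ℝ)
  · rw [Finset.card_eq_one] at h
    obtain ⟨a, rfl⟩ := h
    simpa using hint1 (γ a)
  · rw [Finset.card_eq_two] at h
    obtain ⟨a, b, hab, h⟩ := h
    subst h
    have := hint2 (γ a) (γ b)
    simpa [Finset.prod_pair hab] using this
  · rw [Finset.card_eq_three] at h
    obtain ⟨a, b, c, hab, hac, hbc, h⟩ := h
    subst h
    have := hint3 (γ a) (γ b) (γ c)
    have heq : ∀ t : Fin n → ℝ, (∏ e ∈ ({a, b, c} : Finset ι), t (γ e))
        = t (γ a) * t (γ b) * t (γ c) := by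
      intro t
      rw [Finset.prod_insert (by simp [hab, hac]), Finset.prod_pair hbc, mul_assoc]
    simpa [heq] using this


lemma card_filter_univ [DecidableEq V] {A : Finset (Sym2 V)} (v : V) :
    (Finset.univ.filter (fun e : {e // e ∈ A} => v ∈ e.1)).card = degIn A v := by
  apply Finset.card_bij (fun e _ => e.1)
  · intro a ha
    simp only [Finset.mem_filter, Finset.mem_univ, true_and] at ha
    exact Finset.mem_filter.2 ⟨a.2, ha⟩
  · intro a _ b _ h
    exact Subtype.ext h
  · intro b hb
    simp only [Finset.mem_filter] at hb
    exact ⟨⟨b, hb.1⟩, by simp [hb.2], rfl⟩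

lemma lift_one_add (n : ℕ) (x : ℝ) (s : V → Fin n → ℝ) (e : Sym2 V) :
    Sym2.lift ⟨fun i j => 1 + (n : ℝ) * x * ∑ α, s i α * s j α,
      fun i j => by simp [mul_comm]⟩ e
    = (n : ℝ) * x * Sym2.lift ⟨fun i j => ∑ α, s i α * s j α,
        fun i j => by simp [mul_comm]⟩ e + 1 := by
  induction e with
  | _ i j => simp [add_comm]

lemma lift_dot_sum (n : ℕ) (s : V → Fin n → ℝ) (e : Sym2 V) :
    Sym2.lift ⟨fun i j => ∑ α, s i α * s j α, fun i j => by simp [mul_comm]⟩ e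
    = ∑ α, Sym2.lift ⟨fun i j => s i α * s j α, fun i j => by simp [mul_comm]⟩ e := by
  induction e with
  | _ i j => simp

lemma lift_pair_prod [Fintype V] [DecidableEq V] (n : ℕ) (s : V → Fin n → ℝ) (α : Fin n)
    {e : Sym2 V} (he : ¬ e.IsDiag) :
    Sym2.lift ⟨fun i j => s i α * s j α, fun i j => by simp [mul_comm]⟩ e
    = ∏ v ∈ Finset.univ.filter (fun v => v ∈ e), s v α := by
  induction e with
  | _ i j =>
    rw [Sym2.isDiag_iff_proj_eq] at he
    rw [filter_mem_sym2, Finset.prod_insert (by simpa using he), Finset.prod_singleton,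
      Sym2.lift_mk]

lemma pointwise_expand [Fintype V] [DecidableEq V] (G : SimpleGraph V) [DecidableRel G.Adj]
    (n : ℕ) (x : ℝ) (s : V → Fin n → ℝ) :
    (∏ e ∈ G.edgeFinset,
        Sym2.lift ⟨fun i j => 1 + (n : ℝ) * x * ∑ α, s i α * s j α,
          fun i j => by simp [mul_comm]⟩ e)
    = ∑ A ∈ G.edgeFinset.powerset, ∑ c : {e // e ∈ A} → Fin n,
        ((n : ℝ) * x) ^ A.card *
          ∏ v, ∏ e ∈ Finset.univ.filter (fun e : {e // e ∈ A} => v ∈ e.1), s v (c e) := by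
  classical
  rw [Finset.prod_congr rfl (fun e _ => lift_one_add n x s e), Finset.prod_add]
  refine Finset.sum_congr rfl ?_
  intro A hA
  have hAsub : A ⊆ G.edgeFinset := Finset.mem_powerset.1 hA
  rw [Finset.prod_const_one, mul_one, Finset.prod_mul_distrib, Finset.prod_const,
    ← Finset.mul_sum]
  congr 1
  rw [← Finset.prod_coe_sort A]
  calc (∏ e : {e // e ∈ A},
        Sym2.lift ⟨fun i j => ∑ α, s i α * s j α, fun i j => by simp [mul_comm]⟩ e.1)
      = ∏ e : {e // e ∈ A}, ∑ α,
        Sym2.lift ⟨fun i j => s i α * s j α, fun i j => by simp [mul_comm]⟩ e.1 :=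
        Finset.prod_congr rfl (fun e _ => lift_dot_sum n s e.1)
    _ = ∑ c : {e // e ∈ A} → Fin n, ∏ e : {e // e ∈ A},
        Sym2.lift ⟨fun i j => s i (c e) * s j (c e), fun i j => by simp [mul_comm]⟩ e.1 :=
        Fintype.prod_sum fun (e : {e // e ∈ A}) (α : Fin n) =>
          Sym2.lift ⟨fun i j => s i α * s j α, fun i j => by simp [mul_comm]⟩ e.1
    _ = ∑ c : {e // e ∈ A} → Fin n,
        ∏ v, ∏ e ∈ Finset.univ.filter (fun e : {e // e ∈ A} => v ∈ e.1), s v (c e) := by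
        refine Finset.sum_congr rfl (fun c _ => ?_)
        rw [Finset.prod_congr rfl (fun (e : {e // e ∈ A}) _ =>
          lift_pair_prod n s (c e)
            (SimpleGraph.not_isDiag_of_mem_edgeFinset (hAsub e.2)))]
        refine Finset.prod_comm' ?_
        intro e v
        simp


end LoopExp

section Main
open LoopExp

/-- Let `G = (V, E)` be a finite graph of maximum degree 3, `n` a positive integer, `x`
real, and `μ` a probability measure on `ℝⁿ` whose moments satisfy `E[s^α] = 0`,
`E[s^α s^β] = δ_{αβ}/n` and `E[s^α s^β s^γ] = 0`.  If `(s_i)_{i ∈ V}` are i.i.d. with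
law `μ`, then `E[∏_{ij ∈ E} (1 + n x s_i · s_j)] = Σ_{A ∈ C(G)} n^{c(A)} x^{|A|}`. -/
theorem loop_expansion_of_spin_model
    [Fintype V] [DecidableEq V] (G : SimpleGraph V) [DecidableRel G.Adj]
    (hdeg : ∀ w, G.degree w ≤ 3)
    (n : ℕ) (hn : 0 < n) (x : ℝ)
    (μ : Measure (Fin n → ℝ)) [IsProbabilityMeasure μ]
    (hint1 : ∀ α, Integrable (fun s : Fin n → ℝ => s α) μ)
    (hint2 : ∀ α β, Integrable (fun s : Fin n → ℝ => s α * s β) μ)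
    (hint3 : ∀ α β γ, Integrable (fun s : Fin n → ℝ => s α * s β * s γ) μ)
    (h1 : ∀ α, ∫ s, s α ∂μ = 0)
    (h2 : ∀ α β, ∫ s, s α * s β ∂μ = if α = β then (1 : ℝ) / n else 0)
    (h3 : ∀ α β γ, ∫ s, s α * s β * s γ ∂μ = 0) :
    ∫ s : V → Fin n → ℝ,
        ∏ e ∈ G.edgeFinset,
          Sym2.lift ⟨fun i j => 1 + (n : ℝ) * x * ∑ α, s i α * s j α,
            fun i j => by simp [mul_comm]⟩ e
      ∂(Measure.pi fun _ : V => μ)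
      = ∑ A ∈ G.edgeFinset.powerset.filter (fun A => ∀ w, Even (degIn A w)),
          (n : ℝ) ^ cyclomatic A * x ^ A.card := by
  classical
  -- components of the integrand
  set P : (V → Fin n → ℝ) → Fin n → Sym2 V → ℝ := fun s α =>
    Sym2.lift ⟨fun i j => s i α * s j α, fun i j => by simp [mul_comm]⟩ with hP
  -- the inner integrand, for a subset A and coloring c
  set T : (A : Finset (Sym2 V)) → ({e // e ∈ A} → Fin n) → (V → Fin n → ℝ) → ℝ :=
    fun A c s => ((n : ℝ) * x) ^ A.card *
      ∏ v, ∏ e ∈ Finset.univ.filter (fun e : {e // e ∈ A} => v ∈ e.1), s v (c e) with hT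
  -- pointwise expansion of the integrand
  have hpt : ∀ s : V → Fin n → ℝ,
      (∏ e ∈ G.edgeFinset,
        Sym2.lift ⟨fun i j => 1 + (n : ℝ) * x * ∑ α, s i α * s j α,
          fun i j => by simp [mul_comm]⟩ e)
      = ∑ A ∈ G.edgeFinset.powerset, ∑ c : {e // e ∈ A} → Fin n, T A c s := by
    intro s
    rw [hT]
    exact pointwise_expand G n x s
  rw [show (fun s : V → Fin n → ℝ => ∏ e ∈ G.edgeFinset,
        Sym2.lift ⟨fun i j => 1 + (n : ℝ) * x * ∑ α, s i α * s j α,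
          fun i j => by simp [mul_comm]⟩ e)
      = fun s => ∑ A ∈ G.edgeFinset.powerset, ∑ c : {e // e ∈ A} → Fin n, T A c s
    from funext hpt]
  -- integrability of each term
  have hScard : ∀ (A : Finset (Sym2 V)), A ∈ G.edgeFinset.powerset → ∀ v : V,
      (Finset.univ.filter (fun e : {e // e ∈ A} => v ∈ e.1)).card ≤ 3 := by
    intro A hA v
    rw [card_filter_univ]
    exact le_trans (degIn_le_degree G (Finset.mem_powerset.1 hA) v) (hdeg v)
  have hTint : ∀ (A : Finset (Sym2 V)), A ∈ G.edgeFinset.powerset →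
      ∀ c : {e // e ∈ A} → Fin n, Integrable (T A c) (Measure.pi fun _ : V => μ) := by
    intro A hA c
    apply Integrable.const_mul
    exact my_integrable_pi μ (fun v =>
      moments_integrable hint1 hint2 hint3 _ (hScard A hA v) c)
  rw [integral_finset_sum _ (fun A hA => integrable_finset_sum _ (fun c _ => hTint A hA c))]
  rw [Finset.sum_filter]
  refine Finset.sum_congr rfl ?_
  intro A hA
  rw [integral_finset_sum _ (fun c _ => hTint A hA c)]
  have hAsub : A ⊆ G.edgeFinset := Finset.mem_powerset.1 hA
  have hnd : ∀ e ∈ A, ¬ e.IsDiag := fun e he =>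
    SimpleGraph.not_isDiag_of_mem_edgeFinset (hAsub he)
  -- value of each integral
  have hTval : ∀ c : {e // e ∈ A} → Fin n,
      ∫ s, T A c s ∂(Measure.pi fun _ : V => μ)
      = ((n : ℝ) * x) ^ A.card *
        ∏ v, ∫ t : Fin n → ℝ,
          ∏ e ∈ Finset.univ.filter (fun e : {e // e ∈ A} => v ∈ e.1), t (c e) ∂μ := by
    intro c
    rw [hT]
    simp only
    rw [MeasureTheory.integral_const_mul]
    congr 1
    exact my_integral_pi μ (fun v t =>
      ∏ e ∈ Finset.univ.filter (fun e : {e // e ∈ A} => v ∈ e.1), t (c e))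
  simp only [hTval]
  by_cases hE : ∀ w, Even (degIn A w)
  · rw [if_pos hE]
    have hd2 : ∀ v (e : Sym2 V), e ∈ A → v ∈ e → degIn A v = 2 := by
      intro v e he hv
      have hmem : e ∈ A.filter (fun f => v ∈ f) := Finset.mem_filter.2 ⟨he, hv⟩
      have h1' : 0 < degIn A v := Finset.card_pos.2 ⟨e, hmem⟩
      have hle := le_trans (degIn_le_degree G hAsub v) (hdeg v)
      obtain ⟨k, hk⟩ := hE v
      omega
    -- valid colorings
    set vp : ({e // e ∈ A} → Fin n) → Prop := fun c =>
      ∀ a b : {e // e ∈ A}, touches a.1 b.1 → c a = c b with hvp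
    have heval : ∀ c : {e // e ∈ A} → Fin n,
        (∏ v, ∫ t : Fin n → ℝ,
          ∏ e ∈ Finset.univ.filter (fun e : {e // e ∈ A} => v ∈ e.1), t (c e) ∂μ)
        = if vp c then (1 / (n : ℝ)) ^ A.card else 0 := by
      intro c
      by_cases hvc : vp c
      · rw [if_pos hvc]
        have hvv : ∀ v : V, (∫ t : Fin n → ℝ,
            ∏ e ∈ Finset.univ.filter (fun e : {e // e ∈ A} => v ∈ e.1), t (c e) ∂μ)
            = (1 / (n : ℝ)) ^ (degIn A v / 2) := by
          intro v
          have hcf := card_filter_univ (A := A) (V := V) v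
          by_cases hz : degIn A v = 0
          · have : (Finset.univ.filter (fun e : {e // e ∈ A} => v ∈ e.1)) = ∅ :=
              Finset.card_eq_zero.1 (by rw [hcf, hz])
            rw [this, hz]
            simp [measure_univ]
          · have hex : ∃ e ∈ Finset.univ.filter (fun e : {e // e ∈ A} => v ∈ e.1), True := by
              have : 0 < (Finset.univ.filter (fun e : {e // e ∈ A} => v ∈ e.1)).card := by
                rw [hcf]; omega
              obtain ⟨e, he⟩ := Finset.card_pos.1 this
              exact ⟨e, he, trivial⟩
            obtain ⟨e, he, -⟩ := hex
            have hve : v ∈ e.1 := (Finset.mem_filter.1 he).2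
            have hd : degIn A v = 2 := hd2 v e.1 e.2 hve
            have hc2 : (Finset.univ.filter (fun e : {e // e ∈ A} => v ∈ e.1)).card = 2 := by
              rw [hcf, hd]
            obtain ⟨a, b, hab, hS⟩ := Finset.card_eq_two.1 hc2
            have hva : v ∈ a.1 := by
              have : a ∈ Finset.univ.filter (fun e : {e // e ∈ A} => v ∈ e.1) := by
                rw [hS]; exact Finset.mem_insert_self a {b}
              exact (Finset.mem_filter.1 this).2
            have hvb : v ∈ b.1 := by
              have : b ∈ Finset.univ.filter (fun e : {e // e ∈ A} => v ∈ e.1) := by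
                rw [hS]; exact Finset.mem_insert_of_mem (Finset.mem_singleton_self b)
              exact (Finset.mem_filter.1 this).2
            have hcc : c a = c b := hvc a b ⟨v, hva, hvb⟩
            rw [hS]
            simp only [Finset.prod_pair hab]
            rw [h2 (c a) (c b), if_pos hcc, hd]
            norm_num
        rw [Finset.prod_congr rfl (fun v _ => hvv v), Finset.prod_pow_eq_pow_sum]
        congr 1
        have hsum := sum_degIn hnd
        have hhalf : ∀ v ∈ (Finset.univ : Finset V), 2 * (degIn A v / 2) = degIn A v := by
          intro v _
          obtain ⟨k, hk⟩ := hE v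
          omega
        have h2' : 2 * ∑ v, (degIn A v / 2) = 2 * A.card := by
          rw [Finset.mul_sum, Finset.sum_congr rfl hhalf, hsum]
        omega
      · rw [if_neg hvc]
        have hvc' : ∃ a b : {e // e ∈ A}, touches a.1 b.1 ∧ c a ≠ c b := by
          by_contra hcon
          push_neg at hcon
          exact hvc (fun a b h => hcon a b h)
        obtain ⟨a, b, hab, hne⟩ := hvc'
        obtain ⟨v, hva, hvb⟩ := hab
        have hd : degIn A v = 2 := hd2 v a.1 a.2 hva
        have hcf := card_filter_univ (A := A) (V := V) v
        have habne : a ≠ b := fun h => hne (congrArg c h)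
        have hsub : ({a, b} : Finset {e // e ∈ A}) ⊆
            Finset.univ.filter (fun e : {e // e ∈ A} => v ∈ e.1) := by
          intro z hz
          rcases Finset.mem_insert.1 hz with rfl | hz
          · exact Finset.mem_filter.2 ⟨Finset.mem_univ _, hva⟩
          · rw [Finset.mem_singleton.1 hz]
            exact Finset.mem_filter.2 ⟨Finset.mem_univ _, hvb⟩
        have hSv : Finset.univ.filter (fun e : {e // e ∈ A} => v ∈ e.1) = {a, b} :=
          (Finset.eq_of_subset_of_card_le hsub
            (by rw [hcf, hd, Finset.card_pair habne])).symm
        refine Finset.prod_eq_zero (Finset.mem_univ v) ?_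
        rw [hSv]
        simp only [Finset.prod_pair habne]
        rw [h2 (c a) (c b), if_neg hne]
    simp only [heval, mul_ite, mul_zero]
    rw [Finset.sum_ite, Finset.sum_const, Finset.sum_const_zero, add_zero, nsmul_eq_mul]
    rw [card_valid A n vp (fun c => Iff.rfl), ← cyclomatic_eq hnd hd2]
    have hxx : ((n : ℝ) * x) ^ A.card * (1 / (n : ℝ)) ^ A.card = x ^ A.card := by
      rw [← mul_pow]
      congr 1
      field_simp
    rw [hxx, Nat.cast_pow]
  · rw [if_neg hE]
    push_neg at hE
    obtain ⟨v₀, hodd⟩ := hE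
    refine Finset.sum_eq_zero (fun c _ => ?_)
    have hz : (∫ t : Fin n → ℝ,
        ∏ e ∈ Finset.univ.filter (fun e : {e // e ∈ A} => v₀ ∈ e.1), t (c e) ∂μ) = 0 := by
      have hc13 : (Finset.univ.filter (fun e : {e // e ∈ A} => v₀ ∈ e.1)).card = 1 ∨
          (Finset.univ.filter (fun e : {e // e ∈ A} => v₀ ∈ e.1)).card = 3 := by
        rw [card_filter_univ]
        have hle := le_trans (degIn_le_degree G hAsub v₀) (hdeg v₀)
        rcases Nat.even_or_odd (degIn A v₀) with h | h
        · exact absurd h hodd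
        · rcases h with ⟨k, hk⟩
          omega
      rcases hc13 with h | h
      · obtain ⟨a, ha⟩ := Finset.card_eq_one.1 h
        rw [ha]
        simp only [Finset.prod_singleton]
        exact h1 (c a)
      · obtain ⟨a, b, d, hab, had, hbd, habd⟩ := Finset.card_eq_three.1 h
        rw [habd]
        have hpr : ∀ t : Fin n → ℝ, (∏ e ∈ ({a, b, d} : Finset {e // e ∈ A}), t (c e))
            = t (c a) * t (c b) * t (c d) := by
          intro t
          rw [Finset.prod_insert (by simp [hab, had]), Finset.prod_pair hbd, mul_assoc]
        simp only [hpr]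
        exact h3 (c a) (c b) (c d)
    rw [Finset.prod_eq_zero (Finset.mem_univ v₀) hz, mul_zero]
end Main
end

section
/- Let G=(V,E) be a finite graph of maximum degree 3, let n be a positive integer, let x be a real number, and let u,v∈V be distinct. If the spins (s_i)_{i∈V} are i.i.d. with the face-cubic a priori measure, then E[ (s_u·s_v) ∏_{ij∈E}(1 + n x s_i·s_j) ] = Σ_{A∈S_{u,v}(G)} x^{|A|} n^{c(A)}. -/
open SimpleGraph

variable {V : Type*}

/-- `A ∈ S_{u,v}(G)`: exactly `u` and `v` have odd degree in `(V, A)` (for `u ≠ v`);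
for `u = v` this says that all degrees are even. -/
def inSuv [DecidableEq V] (A : Finset (Sym2 V)) (u v : V) : Prop :=
  ∀ w, Odd (degIn A w) ↔ (u ≠ v ∧ (w = u ∨ w = v))

/-- The face-cubic spin associated to a pair `(α, ±)`: the unit vector `± e_α ∈ ℝⁿ`.
The face-cubic a priori measure is the uniform distribution on these `2n` vectors. -/
def fcSpin (n : ℕ) (p : Fin n × Bool) : Fin n → ℝ :=
  Pi.single p.1 (if p.2 then 1 else -1)



section Aux

open scoped Classical

noncomputable local instance (priority := 100) ccFintype [Fintype V] (G : SimpleGraph V) :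
    Fintype G.ConnectedComponent := Fintype.ofFinite _

/-- Reachability in `G ⊔ edge a b`. -/
lemma reachable_sup_edge {G : SimpleGraph V} {a b x y : V} :
    (G ⊔ edge a b).Reachable x y ↔
      G.Reachable x y ∨ (G.Reachable x a ∧ G.Reachable b y) ∨
        (G.Reachable x b ∧ G.Reachable a y) := by
  constructor
  · rintro ⟨w⟩
    induction w with
    | nil => exact Or.inl (Reachable.refl _)
    | @cons x c y h p ih =>
      rcases h with h | h
      · rcases ih with h1 | ⟨h1, h2⟩ | ⟨h1, h2⟩
        · exact Or.inl (Reachable.trans ⟨h.toWalk⟩ h1)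
        · exact Or.inr (Or.inl ⟨Reachable.trans ⟨h.toWalk⟩ h1, h2⟩)
        · exact Or.inr (Or.inr ⟨Reachable.trans ⟨h.toWalk⟩ h1, h2⟩)
      · rw [edge_adj] at h
        obtain ⟨(⟨rfl, rfl⟩ | ⟨rfl, rfl⟩), _hne⟩ := h
        · rcases ih with h1 | ⟨h1, h2⟩ | ⟨h1, h2⟩
          · exact Or.inr (Or.inl ⟨Reachable.refl _, h1⟩)
          · exact Or.inr (Or.inl ⟨Reachable.refl _, h1.trans (h2.symm.trans h1).symm⟩)
          · exact Or.inl h2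
        · rcases ih with h1 | ⟨h1, h2⟩ | ⟨h1, h2⟩
          · exact Or.inr (Or.inr ⟨Reachable.refl _, h1⟩)
          · exact Or.inl h2
          · exact Or.inr (Or.inr ⟨Reachable.refl _, h1.trans (h2.symm.trans h1).symm⟩)
  · have hle : G ≤ G ⊔ edge a b := le_sup_left
    have hab : ∀ (a b : V), (G ⊔ edge a b).Reachable a b := by
      intro a b
      by_cases hne : a = b
      · subst hne; exact Reachable.refl _
      · exact Adj.reachable (Or.inr (by rw [edge_adj]; exact ⟨Or.inl ⟨rfl, rfl⟩, hne⟩))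
    rintro (h | ⟨h1, h2⟩ | ⟨h1, h2⟩)
    · exact h.mono hle
    · exact ((h1.mono hle).trans (hab a b)).trans (h2.mono hle)
    · exact ((h1.mono hle).trans (hab a b).symm).trans (h2.mono hle)

/-- The canonical map on connected components induced by `G ≤ H`. -/
noncomputable def ccMap {G H : SimpleGraph V} (hle : G ≤ H) :
    G.ConnectedComponent → H.ConnectedComponent :=
  ConnectedComponent.lift (fun v => H.connectedComponentMk v)
    (fun v w p _ => ConnectedComponent.sound (Reachable.mono hle ⟨p⟩))

@[simp] lemma ccMap_mk {G H : SimpleGraph V} (hle : G ≤ H) (v : V) :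
    ccMap hle (G.connectedComponentMk v) = H.connectedComponentMk v := rfl

lemma ccMap_surj {G H : SimpleGraph V} (hle : G ≤ H) : Function.Surjective (ccMap hle) := by
  intro c
  obtain ⟨v, rfl⟩ := c.exists_rep
  exact ⟨G.connectedComponentMk v, rfl⟩

lemma card_cc_le [Fintype V] {G H : SimpleGraph V} (hle : G ≤ H) :
    Nat.card H.ConnectedComponent ≤ Nat.card G.ConnectedComponent :=
  Nat.card_le_card_of_surjective _ (ccMap_surj hle)

lemma card_cc_sup_edge_of_reachable [Fintype V] {G : SimpleGraph V} {a b : V}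
    (h : G.Reachable a b) :
    Nat.card (G ⊔ edge a b).ConnectedComponent = Nat.card G.ConnectedComponent := by
  have hinj : Function.Injective (ccMap (le_sup_left : G ≤ G ⊔ edge a b)) := by
    intro c c' hcc
    obtain ⟨x, rfl⟩ := c.exists_rep
    obtain ⟨y, rfl⟩ := c'.exists_rep
    have hcc' : (G ⊔ edge a b).Reachable x y := ConnectedComponent.exact hcc
    refine ConnectedComponent.sound ?_
    rcases reachable_sup_edge.mp hcc' with h1 | ⟨h1, h2⟩ | ⟨h1, h2⟩
    · exact h1
    · exact (h1.trans h.symm.symm).trans h2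
    · exact (h1.trans h.symm).trans h2
  exact (Nat.card_eq_of_bijective _ ⟨hinj, ccMap_surj _⟩).symm

lemma card_cc_sup_edge_of_not_reachable [Fintype V] {G : SimpleGraph V} {a b : V}
    (hab : ¬ G.Reachable a b) :
    Nat.card G.ConnectedComponent
      = Nat.card (G ⊔ edge a b).ConnectedComponent + 1 := by
  have hne : a ≠ b := fun h => hab (h ▸ Reachable.refl a)
  set c1 := G.connectedComponentMk b with hc1
  set f := ccMap (le_sup_left : G ≤ G ⊔ edge a b) with hf
  have hbij : Function.Bijective (fun c : {c : G.ConnectedComponent // c ≠ c1} => f c.1) := by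
    constructor
    · rintro ⟨c, hc⟩ ⟨c', hc'⟩ hcc
      obtain ⟨x, rfl⟩ := c.exists_rep
      obtain ⟨y, rfl⟩ := c'.exists_rep
      have hcc' : (G ⊔ edge a b).Reachable x y := ConnectedComponent.exact hcc
      refine Subtype.ext (ConnectedComponent.sound ?_)
      rcases reachable_sup_edge.mp hcc' with h1 | ⟨h1, h2⟩ | ⟨h1, h2⟩
      · exact h1
      · exact absurd (ConnectedComponent.sound h2.symm) hc'
      · exact absurd (ConnectedComponent.sound h1) hc
    · intro d
      obtain ⟨z, rfl⟩ := d.exists_rep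
      by_cases hz : G.connectedComponentMk z = c1
      · refine ⟨⟨G.connectedComponentMk a, fun hca => hab ?_⟩, ?_⟩
        · exact (ConnectedComponent.exact hca)
        · have hzb : G.Reachable z b := ConnectedComponent.exact hz
          refine ConnectedComponent.sound ?_
          refine Reachable.trans ?_ ((Reachable.mono le_sup_left hzb).symm)
          exact Adj.reachable (Or.inr (by rw [edge_adj]; exact ⟨Or.inl ⟨rfl, rfl⟩, hne⟩))
      · exact ⟨⟨G.connectedComponentMk z, hz⟩, rfl⟩
  have hcard := Nat.card_eq_of_bijective _ hbij
  have hsub : Nat.card {c : G.ConnectedComponent // c ≠ c1}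
      = Nat.card G.ConnectedComponent - 1 := by
    rw [Nat.card_eq_fintype_card, Nat.card_eq_fintype_card]
    have := Fintype.card_subtype_compl (fun c : G.ConnectedComponent => c = c1)
    simp only [Fintype.card_subtype_eq] at this
    rw [← this]
  have hpos : 0 < Nat.card G.ConnectedComponent := by
    have : Nonempty G.ConnectedComponent := ⟨c1⟩
    exact Nat.card_pos
  omega

lemma isAcyclic_mono {G H : SimpleGraph V} (hle : G ≤ H) (h : H.IsAcyclic) : G.IsAcyclic :=
  fun _ c hc => h (c.mapLe hle) (hc.mapLe hle)

lemma isAcyclic_sup_edge {G : SimpleGraph V} {a b : V} (hac : G.IsAcyclic)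
    (hab : ¬ G.Reachable a b) : (G ⊔ edge a b).IsAcyclic := by
  have hne : a ≠ b := fun h => hab (h ▸ Reachable.refl a)
  intro u c hc
  by_cases he : s(a, b) ∈ c.edges
  · obtain ⟨-, hreach⟩ := (adj_and_reachable_delete_edges_iff_exists_cycle
      (G := G ⊔ edge a b)).mpr ⟨u, c, hc, he⟩
    have hle : (G ⊔ edge a b) \ fromEdgeSet {s(a, b)} ≤ G := by
      intro x y hxy
      obtain ⟨hxy1 | hxy1, hxy2⟩ := hxy
      · exact hxy1
      · rw [edge_adj] at hxy1
        exfalso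
        apply hxy2
        rw [fromEdgeSet_adj]
        rcases hxy1 with ⟨⟨rfl, rfl⟩ | ⟨rfl, rfl⟩, hne'⟩
        · exact ⟨rfl, hne'⟩
        · exact ⟨Sym2.eq_swap, hne'⟩
    exact hab (hreach.mono hle)
  · have hsub : ∀ e ∈ c.edges, e ∈ G.edgeSet := by
      intro e hee
      have := c.edges_subset_edgeSet hee
      rw [edgeSet_sup, edge_edgeSet_of_ne hne] at this
      rcases this with h1 | h1
      · exact h1
      · exact absurd (h1 ▸ hee) he
    exact hac (c.transfer G hsub) (hc.transfer hsub)

lemma card_cc_bot [Fintype V] :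
    Nat.card (⊥ : SimpleGraph V).ConnectedComponent = Nat.card V := by
  symm
  apply Nat.card_eq_of_bijective ((⊥ : SimpleGraph V).connectedComponentMk)
  constructor
  · intro x y hxy
    exact reachable_bot.mp (ConnectedComponent.exact hxy)
  · intro c
    obtain ⟨v, rfl⟩ := c.exists_rep
    exact ⟨v, rfl⟩

lemma card_acyclic [Fintype V] (A : Finset (Sym2 V)) (hA : ∀ e ∈ A, ¬ e.IsDiag)
    (hac : (fromEdgeSet (A : Set (Sym2 V))).IsAcyclic) :
    A.card + Nat.card (fromEdgeSet (A : Set (Sym2 V))).ConnectedComponent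
      = Nat.card V := by
  classical
  induction A using Finset.induction_on with
  | empty =>
    simp only [Finset.coe_empty, fromEdgeSet_empty, Finset.card_empty, zero_add]
    exact card_cc_bot
  | @insert e A hins ih =>
    obtain ⟨⟨a, b⟩, rfl⟩ := e.exists_rep
    have hab : a ≠ b := by
      have := hA _ (Finset.mem_insert_self _ _)
      simpa [Sym2.isDiag_iff_proj_eq] using this
    have hsup : fromEdgeSet ((insert s(a, b) A : Finset (Sym2 V)) : Set (Sym2 V))
        = fromEdgeSet (A : Set (Sym2 V)) ⊔ edge a b := by
      rw [Finset.coe_insert, Set.insert_eq, fromEdgeSet_union, sup_comm]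
      rfl
    rw [hsup] at hac
    have hacA : (fromEdgeSet (A : Set (Sym2 V))).IsAcyclic := isAcyclic_mono le_sup_left hac
    have hnr : ¬ (fromEdgeSet (A : Set (Sym2 V))).Reachable a b := by
      intro hr
      refine hr.elim_path fun p => ?_
      have hadj : (fromEdgeSet (A : Set (Sym2 V)) ⊔ edge a b).Adj b a :=
        Or.inr (by rw [edge_adj]; exact ⟨Or.inr ⟨rfl, rfl⟩, hab.symm⟩)
      have hcyc := Path.cons_isCycle
        (p := ⟨p.1.mapLe (le_sup_left : _ ≤ fromEdgeSet (A : Set (Sym2 V)) ⊔ edge a b),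
          p.2.mapLe _⟩) hadj ?_
      · exact hac _ hcyc
      · simp only [Walk.edges_map, List.mem_map]
        rintro ⟨e', he', heq⟩
        have : e' ∈ (A : Set (Sym2 V)) := by
          have := p.1.edges_subset_edgeSet he'
          rw [edgeSet_fromEdgeSet] at this
          exact this.1
        apply hins
        have heq' : e' = s(a, b) := by
          rw [Sym2.eq_swap]
          simpa [Sym2.map_id'] using heq
        show s(a, b) ∈ A
        rw [← heq']
        exact_mod_cast ‹e' ∈ (A : Set (Sym2 V))›
    have hcount := card_cc_sup_edge_of_not_reachable hnr
    rw [hsup, Finset.card_insert_of_notMem hins]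
    have := ih (fun e he => hA e (Finset.mem_insert_of_mem he)) hacA
    omega

lemma reachable_of_adj_reachable {G H : SimpleGraph V}
    (h : ∀ a b, G.Adj a b → H.Reachable a b) {x y : V} (hr : G.Reachable x y) :
    H.Reachable x y := by
  obtain ⟨w⟩ := hr
  induction w with
  | nil => exact Reachable.refl _
  | cons hadj _ ih => exact (h _ _ hadj).trans ih

lemma cyclomatic_add_eq [Fintype V] [DecidableEq V] (A : Finset (Sym2 V))
    (hA : ∀ e ∈ A, ¬ e.IsDiag) :
    cyclomatic A + Nat.card V
      = A.card + Nat.card (fromEdgeSet (A : Set (Sym2 V))).ConnectedComponent := by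
  set S : Set ℕ := {k | ∃ B ⊆ A, B.card = k ∧
    (SimpleGraph.fromEdgeSet ((A \ B : Finset (Sym2 V)) : Set (Sym2 V))).IsAcyclic} with hS
  -- maximal acyclic subset
  obtain ⟨C, hCmem, hmax⟩ := Finset.exists_max_image
    ((A.powerset).filter (fun C : Finset (Sym2 V) => (fromEdgeSet (↑C : Set (Sym2 V))).IsAcyclic))
    (fun C => C.card)
    ⟨∅, by simp [isAcyclic_bot]⟩
  rw [Finset.mem_filter, Finset.mem_powerset] at hCmem
  obtain ⟨hCA, hCac⟩ := hCmem
  have hreach : ∀ a b : V, s(a, b) ∈ A → (fromEdgeSet (C : Set (Sym2 V))).Reachable a b := by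
    intro a b habA
    have hab : a ≠ b := by
      have := hA _ habA
      simpa [Sym2.isDiag_iff_proj_eq] using this
    by_contra hnr
    have hnotmem : s(a, b) ∉ C := by
      intro hmem
      exact hnr (Adj.reachable (by rw [fromEdgeSet_adj]; exact ⟨hmem, hab⟩))
    have hsup : fromEdgeSet ((insert s(a, b) C : Finset (Sym2 V)) : Set (Sym2 V))
        = fromEdgeSet (C : Set (Sym2 V)) ⊔ edge a b := by
      rw [Finset.coe_insert, Set.insert_eq, fromEdgeSet_union, sup_comm]
      rfl
    have hmem : insert s(a, b) C ∈
        (A.powerset).filter (fun C : Finset (Sym2 V) => (fromEdgeSet (↑C : Set (Sym2 V))).IsAcyclic) := by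
      rw [Finset.mem_filter, Finset.mem_powerset, hsup]
      exact ⟨Finset.insert_subset habA hCA, isAcyclic_sup_edge hCac hnr⟩
    have := hmax _ hmem
    rw [Finset.card_insert_of_notMem hnotmem] at this
    omega
  -- same component counts
  have hccle : Nat.card (fromEdgeSet (A : Set (Sym2 V))).ConnectedComponent
      = Nat.card (fromEdgeSet (C : Set (Sym2 V))).ConnectedComponent := by
    have hle : fromEdgeSet (C : Set (Sym2 V)) ≤ fromEdgeSet (A : Set (Sym2 V)) :=
      fromEdgeSet_mono (by exact_mod_cast hCA)
    symm
    apply Nat.card_eq_of_bijective (ccMap hle)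
    constructor
    · intro c c' hcc
      obtain ⟨x, rfl⟩ := c.exists_rep
      obtain ⟨y, rfl⟩ := c'.exists_rep
      have hxy : (fromEdgeSet (A : Set (Sym2 V))).Reachable x y := ConnectedComponent.exact hcc
      refine ConnectedComponent.sound ?_
      refine reachable_of_adj_reachable ?_ hxy
      intro p q hpq
      rw [fromEdgeSet_adj] at hpq
      exact hreach p q (by exact_mod_cast hpq.1)
    · exact ccMap_surj hle
  have hCcard : C.card
      + Nat.card (fromEdgeSet (A : Set (Sym2 V))).ConnectedComponent = Nat.card V := by
    rw [hccle]
    exact card_acyclic C (fun e he => hA e (hCA he)) hCac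
  -- membership of k0
  have hk0 : (A \ C).card ∈ S := by
    refine ⟨A \ C, Finset.sdiff_subset, rfl, ?_⟩
    rw [Finset.sdiff_sdiff_eq_self hCA]
    exact hCac
  -- lower bound
  have hlb : ∀ k ∈ S, A.card + Nat.card (fromEdgeSet (A : Set (Sym2 V))).ConnectedComponent
      ≤ k + Nat.card V := by
    rintro k ⟨B, hBA, rfl, hBac⟩
    have h1 := card_acyclic (A \ B) (fun e he => hA e (Finset.sdiff_subset he)) hBac
    have h2 : Nat.card (fromEdgeSet (A : Set (Sym2 V))).ConnectedComponent
        ≤ Nat.card (fromEdgeSet ((A \ B : Finset (Sym2 V)) : Set (Sym2 V))).ConnectedComponent :=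
      card_cc_le (fromEdgeSet_mono (by exact_mod_cast Finset.sdiff_subset))
    have h3 : (A \ B).card = A.card - B.card := Finset.card_sdiff_of_subset hBA
    have h4 : B.card ≤ A.card := Finset.card_le_card hBA
    omega
  have hsdcard : (A \ C).card = A.card - C.card := Finset.card_sdiff_of_subset hCA
  have hCle : C.card ≤ A.card := Finset.card_le_card hCA
  have hinf_le : cyclomatic A ≤ (A \ C).card := Nat.sInf_le hk0
  have hinf_mem : cyclomatic A ∈ S := Nat.sInf_mem ⟨_, hk0⟩
  have := hlb _ hinf_mem
  omega

lemma reachable_of_inSuv [Fintype V] [DecidableEq V] {A : Finset (Sym2 V)}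
    (hA : ∀ e ∈ A, ¬ e.IsDiag) {u v : V} (huv : u ≠ v) (h : inSuv A u v) :
    (fromEdgeSet (A : Set (Sym2 V))).Reachable u v := by
  by_contra hnr
  set Cs : Finset V := Finset.univ.filter
    (fun w => (fromEdgeSet (A : Set (Sym2 V))).Reachable u w) with hCs
  have huC : u ∈ Cs := by simp [hCs]
  have hvC : v ∉ Cs := by simp [hCs, hnr]
  have heven : Even (∑ w ∈ Cs, degIn A w) := by
    have hrw : ∑ w ∈ Cs, degIn A w
        = ∑ e ∈ A, (Cs.filter (fun w => w ∈ e)).card := by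
      simp only [degIn, Finset.card_filter]
      exact Finset.sum_comm
    rw [hrw]
    apply Finset.even_sum
    intro e he
    obtain ⟨⟨a, b⟩, rfl⟩ := e.exists_rep
    have hab : a ≠ b := by
      have := hA _ he
      simpa [Sym2.isDiag_iff_proj_eq] using this
    have hadj : (fromEdgeSet (A : Set (Sym2 V))).Adj a b := by
      rw [fromEdgeSet_adj]
      exact ⟨by exact_mod_cast he, hab⟩
    have hiff : a ∈ Cs ↔ b ∈ Cs := by
      simp only [hCs, Finset.mem_filter, Finset.mem_univ, true_and]
      exact ⟨fun hr => hr.trans hadj.reachable, fun hr => hr.trans hadj.symm.reachable⟩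
    by_cases ha : a ∈ Cs
    · have : Cs.filter (fun w => w ∈ s(a, b)) = {a, b} := by
        ext w
        simp only [Finset.mem_filter, Sym2.mem_iff, Finset.mem_insert, Finset.mem_singleton]
        constructor
        · tauto
        · rintro (rfl | rfl)
          · exact ⟨ha, Or.inl rfl⟩
          · exact ⟨hiff.mp ha, Or.inr rfl⟩
      rw [this, Finset.card_pair hab]
      exact even_two
    · have : Cs.filter (fun w => w ∈ s(a, b)) = ∅ := by
        ext w
        simp only [Finset.mem_filter, Sym2.mem_iff, Finset.notMem_empty, iff_false, not_and]
        rintro hw (rfl | rfl)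
        · exact ha hw
        · exact ha (hiff.mpr hw)
      rw [this]
      simp
  have hodd : Odd (∑ w ∈ Cs, degIn A w) := by
    rw [← Finset.add_sum_erase _ _ huC]
    apply Odd.add_even
    · exact (h u).mpr ⟨huv, Or.inl rfl⟩
    · apply Finset.even_sum
      intro w hw
      rw [Finset.mem_erase] at hw
      rw [← Nat.not_odd_iff_even, h w]
      push_neg
      intro _
      constructor
      · exact hw.1
      · rintro rfl
        exact hvC hw.2
  exact (Nat.not_odd_iff_even.mpr heven) hodd

/-- sign of a boolean -/
def sg (b : Bool) : ℝ := if b then 1 else -1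

noncomputable def edelta (τ : V → Fin n) : Sym2 V → ℝ :=
  Sym2.lift ⟨fun i j => if τ i = τ j then 1 else 0, fun i j => by simp [eq_comm]⟩

noncomputable def esg (ε : V → Bool) : Sym2 V → ℝ :=
  Sym2.lift ⟨fun i j => sg (ε i) * sg (ε j), fun i j => by simp [mul_comm]⟩

lemma dot_eq {n : ℕ} (p q : Fin n × Bool) :
    ∑ α, fcSpin n p α * fcSpin n q α
      = (if p.1 = q.1 then (1:ℝ) else 0) * (sg p.2 * sg q.2) := by
  simp only [fcSpin, Pi.single_apply, sg]
  rw [Finset.sum_eq_single p.1]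
  · by_cases h : p.1 = q.1 <;> simp [h] <;> split_ifs <;> ring
  · intro b _ hb
    simp [hb]
  · simp

lemma spin_lift_eq {n : ℕ} (σ : V → Fin n × Bool) (e : Sym2 V) :
    Sym2.lift ⟨fun i j => ∑ α, fcSpin n (σ i) α * fcSpin n (σ j) α,
        fun i j => by simp [mul_comm]⟩ e
      = edelta (fun w => (σ w).1) e * esg (fun w => (σ w).2) e := by
  induction e using Sym2.ind with
  | _ i j => simp [edelta, esg, dot_eq]

-- Sign part --------------------------------------------------------------

lemma esg_eq_prod [Fintype V] [DecidableEq V] (ε : V → Bool) {e : Sym2 V} (he : ¬ e.IsDiag) :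
    esg ε e = ∏ w ∈ Finset.univ.filter (· ∈ e), sg (ε w) := by
  induction e using Sym2.ind with
  | _ i j =>
    have hij : i ≠ j := by simpa [Sym2.isDiag_iff_proj_eq] using he
    have : Finset.univ.filter (· ∈ s(i, j)) = {i, j} := by
      ext w; simp [Sym2.mem_iff]
    rw [this, Finset.prod_pair hij]
    simp [esg]

lemma prod_esg [Fintype V] [DecidableEq V] (ε : V → Bool) (A : Finset (Sym2 V))
    (hA : ∀ e ∈ A, ¬ e.IsDiag) :
    ∏ e ∈ A, esg ε e = ∏ w, sg (ε w) ^ degIn A w := by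
  have h1 : ∏ e ∈ A, esg ε e
      = ∏ e ∈ A, ∏ w ∈ Finset.univ.filter (· ∈ e), sg (ε w) :=
    Finset.prod_congr rfl fun e he => esg_eq_prod ε (hA e he)
  rw [h1]
  rw [Finset.prod_comm' (t' := Finset.univ) (s' := fun w => A.filter (fun e => w ∈ e))
    (by intro e w; simp only [Finset.mem_filter, Finset.mem_univ, true_and, and_comm])]
  refine Finset.prod_congr rfl fun w _ => ?_
  rw [Finset.prod_const, degIn]

lemma sum_bool_sg (d c1 c2 : ℕ) (h1 : c1 ≤ 1) (h2 : c2 ≤ 1) :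
    (∑ b : Bool, ((if c1 = 1 then sg b else 1) * (if c2 = 1 then sg b else 1) * sg b ^ d))
      = if Even (d + c1 + c2) then 2 else 0 := by
  interval_cases c1 <;> interval_cases c2 <;>
    rcases Nat.even_or_odd d with h | h <;>
    simp [Fintype.sum_bool, sg, h.neg_one_pow, Nat.even_add_one, Nat.even_iff, Nat.odd_iff,
      Nat.even_iff.mp, h] <;>
    first
      | (norm_num; done)
      | (rw [Nat.even_iff] at h ⊢; omega)
      | (rw [Nat.odd_iff] at h; rw [Nat.even_iff]; omega)
      | (rw [Nat.odd_iff] at h; rw [if_neg (by omega : ¬ d % 2 = 0)])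
      | exact Nat.odd_iff.mp h

lemma sg_eval [Fintype V] [DecidableEq V] (A : Finset (Sym2 V))
    (hA : ∀ e ∈ A, ¬ e.IsDiag) (u v : V) (huv : u ≠ v) :
    ∑ ε : V → Bool, esg ε s(u, v) * ∏ e ∈ A, esg ε e
      = if inSuv A u v then (2:ℝ) ^ Fintype.card V else 0 := by
  set H : V → Bool → ℝ := fun w b =>
    (if w = u then sg b else 1) * (if w = v then sg b else 1) * sg b ^ degIn A w with hH
  set dd : V → ℕ := fun w =>
    degIn A w + (if w = u then 1 else 0) + (if w = v then 1 else 0) with hdd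
  have hstep : ∀ ε : V → Bool, esg ε s(u, v) * ∏ e ∈ A, esg ε e
      = ∏ w, H w (ε w) := by
    intro ε
    rw [prod_esg ε A hA]
    simp only [hH, Finset.prod_mul_distrib]
    rw [Fintype.prod_ite_eq' u (fun w => sg (ε w)), Fintype.prod_ite_eq' v (fun w => sg (ε w))]
    simp [esg]
  calc ∑ ε : V → Bool, esg ε s(u, v) * ∏ e ∈ A, esg ε e
      = ∑ ε : V → Bool, ∏ w, H w (ε w) := Finset.sum_congr rfl fun ε _ => hstep ε
    _ = ∏ w, ∑ b : Bool, H w b := by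
        rw [Finset.prod_univ_sum]
        rw [← Fintype.piFinset_univ]
    _ = ∏ w, (if Even (dd w) then (2:ℝ) else 0) := by
        refine Finset.prod_congr rfl fun w _ => ?_
        have hb : ∀ b : Bool, H w b
            = (if (if w = u then 1 else 0) = 1 then sg b else 1)
              * (if (if w = v then 1 else 0) = 1 then sg b else 1) * sg b ^ degIn A w := by
          intro b
          simp only [hH]
          by_cases h1 : w = u <;> by_cases h2 : w = v <;> simp [h1, h2]
        simp only [hb]
        rw [sum_bool_sg _ _ _ (by split_ifs <;> omega) (by split_ifs <;> omega)]
    _ = if (∀ w, Even (dd w)) then (2:ℝ) ^ Fintype.card V else 0 := by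
        by_cases hall : ∀ w, Even (dd w)
        · rw [if_pos hall]
          rw [Finset.prod_congr rfl (fun w _ => if_pos (hall w)), Finset.prod_const]
          simp
        · rw [if_neg hall]
          push_neg at hall
          obtain ⟨w, hw⟩ := hall
          exact Finset.prod_eq_zero (Finset.mem_univ w) (if_neg hw)
    _ = if inSuv A u v then (2:ℝ) ^ Fintype.card V else 0 := by
        congr 1
        apply propext
        constructor
        · intro hall w
          have hw := hall w
          rw [hdd] at hw
          constructor
          · intro hodd
            refine ⟨huv, ?_⟩
            by_contra hcon
            push_neg at hcon
            simp only [if_neg hcon.1, if_neg hcon.2, Nat.even_iff] at hw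
            rw [Nat.odd_iff] at hodd
            omega
          · rintro ⟨-, (rfl | rfl)⟩
            · simp only [if_pos rfl, if_neg huv, if_true, eq_self_iff_true, Nat.even_iff] at hw
              rw [Nat.odd_iff]
              omega
            · simp only [if_neg (Ne.symm huv), if_pos rfl, if_true, eq_self_iff_true, Nat.even_iff] at hw
              rw [Nat.odd_iff]
              omega
        · intro hins w
          rw [hdd]
          by_cases h1 : w = u
          · subst h1
            have hodd : Odd (degIn A w) := (hins w).mpr ⟨huv, Or.inl rfl⟩
            simp only [if_pos rfl, if_neg huv, if_true, eq_self_iff_true, Nat.even_iff]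
            rw [Nat.odd_iff] at hodd
            omega
          · by_cases h2 : w = v
            · subst h2
              have hodd : Odd (degIn A w) := (hins w).mpr ⟨huv, Or.inr rfl⟩
              simp only [if_neg h1, if_pos rfl, if_true, eq_self_iff_true, Nat.even_iff]
              rw [Nat.odd_iff] at hodd
              omega
            · have heven : ¬ Odd (degIn A w) := by
                intro ho
                rcases ((hins w).mp ho).2 with rfl | rfl
                · exact h1 rfl
                · exact h2 rfl
              simp only [if_neg h1, if_neg h2, Nat.even_iff]
              rw [Nat.odd_iff] at heven
              omega

lemma edelta_eq_ite [Fintype V] [DecidableEq V] {n : ℕ} (τ : V → Fin n) (e : Sym2 V) :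
    edelta τ e = if (∀ x ∈ e, ∀ y ∈ e, τ x = τ y) then (1:ℝ) else 0 := by
  induction e using Sym2.ind with
  | _ i j =>
    simp only [edelta, Sym2.lift_mk]
    refine if_congr ?_ rfl rfl
    constructor
    · intro h x hx y hy
      rw [Sym2.mem_iff] at hx hy
      rcases hx with rfl | rfl <;> rcases hy with rfl | rfl
      · rfl
      · exact h
      · exact h.symm
      · rfl
    · intro h
      exact h i (Sym2.mem_mk_left i j) j (Sym2.mem_mk_right i j)

lemma tau_const {n : ℕ} {A : Finset (Sym2 V)} {τ : V → Fin n}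
    (h : ∀ e ∈ A, ∀ x ∈ e, ∀ y ∈ e, τ x = τ y) {x y : V}
    (hr : (fromEdgeSet (A : Set (Sym2 V))).Reachable x y) : τ x = τ y := by
  obtain ⟨w⟩ := hr
  induction w with
  | nil => rfl
  | @cons a b c hadj p ih =>
    rw [fromEdgeSet_adj] at hadj
    have hab : τ a = τ b :=
      h _ (by exact_mod_cast hadj.1) a (Sym2.mem_mk_left a b) b (Sym2.mem_mk_right a b)
    exact hab.trans ih

noncomputable def compEquiv [Fintype V] [DecidableEq V] (n : ℕ) (A : Finset (Sym2 V)) :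
    {τ : V → Fin n // ∀ e ∈ A, ∀ x ∈ e, ∀ y ∈ e, τ x = τ y}
      ≃ ((fromEdgeSet (A : Set (Sym2 V))).ConnectedComponent → Fin n) where
  toFun := fun ⟨τ, h⟩ => ConnectedComponent.lift τ (fun _ _ p _ => tau_const h ⟨p⟩)
  invFun g := ⟨fun w => g ((fromEdgeSet (A : Set (Sym2 V))).connectedComponentMk w), by
    intro e he x hx y hy
    by_cases hxy : x = y
    · rw [hxy]
    · have he' : e = s(x, y) :=
        Sym2.eq_of_ne_mem hxy hx hy (Sym2.mem_mk_left x y) (Sym2.mem_mk_right x y)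
      have hadj : (fromEdgeSet (A : Set (Sym2 V))).Adj x y := by
        rw [fromEdgeSet_adj]
        exact ⟨by exact_mod_cast (he' ▸ he), hxy⟩
      show g ((fromEdgeSet (A : Set (Sym2 V))).connectedComponentMk x)
        = g ((fromEdgeSet (A : Set (Sym2 V))).connectedComponentMk y)
      rw [ConnectedComponent.sound hadj.reachable]⟩
  left_inv := fun ⟨τ, h⟩ => Subtype.ext (funext fun w => rfl)
  right_inv := fun g => by
    funext c
    obtain ⟨w, rfl⟩ := c.exists_rep
    rfl

lemma pair_cond {n : ℕ} {τ : V → Fin n} {u v : V} (h : τ u = τ v) :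
    ∀ x ∈ s(u, v), ∀ y ∈ s(u, v), τ x = τ y := by
  intro x hx y hy
  rw [Sym2.mem_iff] at hx hy
  rcases hx with rfl | rfl <;> rcases hy with rfl | rfl
  · rfl
  · exact h
  · exact h.symm
  · rfl

lemma delta_eval [Fintype V] [DecidableEq V] (n : ℕ) (A : Finset (Sym2 V)) {u v : V}
    (hconn : (fromEdgeSet (A : Set (Sym2 V))).Reachable u v) :
    ∑ τ : V → Fin n, edelta τ s(u, v) * ∏ e ∈ A, edelta τ e
      = (n:ℝ) ^ Nat.card (fromEdgeSet (A : Set (Sym2 V))).ConnectedComponent := by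
  have hterm : ∀ τ : V → Fin n, edelta τ s(u, v) * ∏ e ∈ A, edelta τ e
      = if (∀ e ∈ A, ∀ x ∈ e, ∀ y ∈ e, τ x = τ y) then (1:ℝ) else 0 := by
    intro τ
    rw [Finset.prod_congr rfl (fun e _ => edelta_eq_ite τ e)]
    rw [Finset.prod_boole (s := A) (p := fun e => ∀ x ∈ e, ∀ y ∈ e, τ x = τ y)]
    by_cases hp : ∀ e ∈ A, ∀ x ∈ e, ∀ y ∈ e, τ x = τ y
    · rw [if_pos hp, if_pos hp, mul_one, edelta_eq_ite,
        if_pos (pair_cond (tau_const hp hconn))]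
    · rw [if_neg hp, if_neg hp, mul_zero]
  simp only [hterm]
  rw [Finset.sum_boole]
  have hcount : (Finset.univ.filter
        fun τ : V → Fin n => (∀ e ∈ A, ∀ x ∈ e, ∀ y ∈ e, τ x = τ y)).card
      = n ^ Nat.card (fromEdgeSet (A : Set (Sym2 V))).ConnectedComponent := by
    rw [← Fintype.card_subtype]
    rw [Fintype.card_congr (compEquiv n A)]
    rw [Fintype.card_fun]
    rw [Fintype.card_fin]
    rw [Nat.card_eq_fintype_card]
  rw [hcount]
  push_cast
  ring

lemma T_factor [Fintype V] [DecidableEq V] (n : ℕ) (A : Finset (Sym2 V)) (u v : V) :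
    ∑ σ : V → Fin n × Bool,
        (edelta (fun w => (σ w).1) s(u, v) * esg (fun w => (σ w).2) s(u, v))
          * ∏ e ∈ A, (edelta (fun w => (σ w).1) e * esg (fun w => (σ w).2) e)
      = (∑ τ : V → Fin n, edelta τ s(u, v) * ∏ e ∈ A, edelta τ e)
          * (∑ ε : V → Bool, esg ε s(u, v) * ∏ e ∈ A, esg ε e) := by
  rw [Finset.sum_mul_sum]
  refine Eq.trans (Fintype.sum_equiv (Equiv.arrowProdEquivProdArrow V (fun _ => Fin n) (fun _ => Bool)) _
    (fun p => (edelta p.1 s(u, v) * ∏ e ∈ A, edelta p.1 e)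
      * (esg p.2 s(u, v) * ∏ e ∈ A, esg p.2 e)) fun σ => ?_) (Fintype.sum_prod_type _)
  simp only [Equiv.arrowProdEquivProdArrow, Equiv.coe_fn_mk]
  rw [Finset.prod_mul_distrib]
  ring


end Aux

open scoped Classical in
/-- Let `G = (V, E)` be a finite graph of maximum degree 3, `n` a positive integer, `x`
real, and `u ≠ v` vertices.  If the spins `(s_i)_{i ∈ V}` are i.i.d. with the face-cubic
a priori measure, then
`E[(s_u · s_v) ∏_{ij ∈ E} (1 + n x s_i · s_j)] = Σ_{A ∈ S_{u,v}(G)} x^{|A|} n^{c(A)}`. -/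
theorem face_cubic_two_point_expansion
    [Fintype V] [DecidableEq V] (G : SimpleGraph V) [DecidableRel G.Adj]
    (hdeg : ∀ w, G.degree w ≤ 3)
    (n : ℕ) (hn : 0 < n) (x : ℝ) (u v : V) (huv : u ≠ v) :
    (1 / (2 * n : ℝ)) ^ Fintype.card V *
      ∑ σ : V → Fin n × Bool,
        (∑ α, fcSpin n (σ u) α * fcSpin n (σ v) α) *
        ∏ e ∈ G.edgeFinset,
          Sym2.lift ⟨fun i j => 1 + (n : ℝ) * x * ∑ α, fcSpin n (σ i) α * fcSpin n (σ j) α,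
            fun i j => by simp [mul_comm]⟩ e
      = ∑ A ∈ G.edgeFinset.powerset.filter (fun A => inSuv A u v),
          x ^ A.card * (n : ℝ) ^ cyclomatic A := by
  have hnd : ∀ e ∈ G.edgeFinset, ¬ e.IsDiag :=
    fun e he => G.not_isDiag_of_mem_edgeSet (mem_edgeFinset.mp he)
  -- rewrite each edge factor and the two-point factor
  have hS0 : ∀ σ : V → Fin n × Bool,
      (∑ α, fcSpin n (σ u) α * fcSpin n (σ v) α)
        = edelta (fun w => (σ w).1) s(u, v) * esg (fun w => (σ w).2) s(u, v) := by
    intro σ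
    rw [dot_eq]
    simp [edelta, esg]
  have hfac : ∀ (σ : V → Fin n × Bool) (e : Sym2 V),
      Sym2.lift ⟨fun i j => 1 + (n : ℝ) * x * ∑ α, fcSpin n (σ i) α * fcSpin n (σ j) α,
          fun i j => by simp [mul_comm]⟩ e
        = (n : ℝ) * x * (edelta (fun w => (σ w).1) e * esg (fun w => (σ w).2) e) + 1 := by
    intro σ e
    induction e using Sym2.ind with
    | _ i j =>
      rw [Sym2.lift_mk]
      show (1:ℝ) + (n:ℝ) * x * (∑ α, fcSpin n (σ i) α * fcSpin n (σ j) α) = _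
      rw [dot_eq]
      simp [edelta, esg]
      ring
  -- expand the product over edges
  have hexp : ∀ σ : V → Fin n × Bool,
      (∑ α, fcSpin n (σ u) α * fcSpin n (σ v) α) *
        ∏ e ∈ G.edgeFinset,
          Sym2.lift ⟨fun i j => 1 + (n : ℝ) * x * ∑ α, fcSpin n (σ i) α * fcSpin n (σ j) α,
            fun i j => by simp [mul_comm]⟩ e
      = ∑ A ∈ G.edgeFinset.powerset,
          ((n : ℝ) * x) ^ A.card *
            ((edelta (fun w => (σ w).1) s(u, v) * esg (fun w => (σ w).2) s(u, v))
              * ∏ e ∈ A, (edelta (fun w => (σ w).1) e * esg (fun w => (σ w).2) e)) := by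
    intro σ
    rw [hS0 σ, Finset.prod_congr rfl (fun e _ => hfac σ e), Finset.prod_add]
    rw [Finset.mul_sum]
    refine Finset.sum_congr rfl fun A hA => ?_
    rw [Finset.prod_const_one, mul_one]
    rw [Finset.prod_mul_distrib, Finset.prod_const]
    ring
  rw [Finset.sum_congr rfl (fun σ _ => hexp σ), Finset.sum_comm]
  -- evaluate the inner sum for each A
  have hinner : ∀ A ∈ G.edgeFinset.powerset,
      (∑ σ : V → Fin n × Bool,
        ((n : ℝ) * x) ^ A.card *
          ((edelta (fun w => (σ w).1) s(u, v) * esg (fun w => (σ w).2) s(u, v))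
            * ∏ e ∈ A, (edelta (fun w => (σ w).1) e * esg (fun w => (σ w).2) e)))
      = if inSuv A u v then
          ((n : ℝ) * x) ^ A.card
            * ((n:ℝ) ^ Nat.card (fromEdgeSet (A : Set (Sym2 V))).ConnectedComponent
              * (2:ℝ) ^ Fintype.card V)
        else 0 := by
    intro A hA
    rw [Finset.mem_powerset] at hA
    have hAnd : ∀ e ∈ A, ¬ e.IsDiag := fun e he => hnd e (hA he)
    rw [← Finset.mul_sum, T_factor n A u v, sg_eval A hAnd u v huv]
    by_cases hins : inSuv A u v
    · rw [if_pos hins, if_pos hins,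
        delta_eval n A (reachable_of_inSuv hAnd huv hins)]
    · rw [if_neg hins, if_neg hins, mul_zero, mul_zero]
  rw [Finset.sum_congr rfl hinner]
  -- match with the RHS
  rw [Finset.sum_filter, Finset.mul_sum]
  refine Finset.sum_congr rfl fun A hA => ?_
  rw [Finset.mem_powerset] at hA
  have hAnd : ∀ e ∈ A, ¬ e.IsDiag := fun e he => hnd e (hA he)
  by_cases hins : inSuv A u v
  · rw [if_pos hins, if_pos hins]
    have hkey := cyclomatic_add_eq A hAnd
    rw [Nat.card_eq_fintype_card] at hkey
    have hnR : (n:ℝ) ≠ 0 := Nat.cast_ne_zero.mpr hn.ne'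
    set cc := Nat.card (fromEdgeSet (A : Set (Sym2 V))).ConnectedComponent with hcc
    have hpow : (n:ℝ) ^ A.card * (n:ℝ) ^ cc
        = (n:ℝ) ^ cyclomatic A * (n:ℝ) ^ Fintype.card V := by
      rw [← pow_add, ← pow_add]
      congr 1
      omega
    have h2n : ((2:ℝ) * n) ≠ 0 := by positivity
    rw [mul_pow (n:ℝ) x, div_pow, mul_pow (2:ℝ) (n:ℝ), one_pow]
    field_simp
    linear_combination (x ^ A.card) * hpow
  · rw [if_neg hins, if_neg hins, mul_zero]
end

section
/- The girth of the hydrogen-peroxide lattice is 10: every cycle in the lattice has length at least 10, and there exists a cycle of length exactly 10. -/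
/-- One directed step of the hydrogen-peroxide lattice: from `p` to `q` along a positive
coordinate direction, allowed according to the parity conditions defining
`E_x`, `E_y`, `E_z`. -/
def hpStep (p q : ℤ × ℤ × ℤ) : Prop :=
  (q = (p.1 + 1, p.2.1, p.2.2) ∧ (p.2.2 + p.1) % 2 = 0) ∨
  (q = (p.1, p.2.1 + 1, p.2.2) ∧ (p.1 + p.2.1) % 2 = 0) ∨
  (q = (p.1, p.2.1, p.2.2 + 1) ∧ (p.2.1 + p.2.2) % 2 = 0)

/-- The hydrogen-peroxide lattice: the graph with vertex set `ℤ³` and edge set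
`E_x ∪ E_y ∪ E_z`, where
`E_x = {(x,y,z)(x+1,y,z) : z + x ≡ 0 mod 2}`,
`E_y = {(x,y,z)(x,y+1,z) : x + y ≡ 0 mod 2}`,
`E_z = {(x,y,z)(x,y,z+1) : y + z ≡ 0 mod 2}`. -/
def hpLattice : SimpleGraph (ℤ × ℤ × ℤ) where
  Adj p q := hpStep p q ∨ hpStep q p
  symm := ⟨fun p q h => h.symm⟩
  loopless := ⟨by
    rintro ⟨x, y, z⟩ (h | h) <;>
      rcases h with ⟨h, -⟩ | ⟨h, -⟩ | ⟨h, -⟩ <;> simp [Prod.ext_iff] at h⟩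


instance (p q : ℤ × ℤ × ℤ) : Decidable (hpStep p q) :=
  inferInstanceAs (Decidable (_ ∨ _ ∨ _))

instance : DecidableRel hpLattice.Adj :=
  fun p q => inferInstanceAs (Decidable (hpStep p q ∨ hpStep q p))

def hpNbrs (p : ℤ × ℤ × ℤ) : List (ℤ × ℤ × ℤ) :=
  [ (if (p.2.2 + p.1) % 2 = 0 then (p.1 + 1, p.2.1, p.2.2) else (p.1 - 1, p.2.1, p.2.2)),
    (if (p.1 + p.2.1) % 2 = 0 then (p.1, p.2.1 + 1, p.2.2) else (p.1, p.2.1 - 1, p.2.2)),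
    (if (p.2.1 + p.2.2) % 2 = 0 then (p.1, p.2.1, p.2.2 + 1) else (p.1, p.2.1, p.2.2 - 1)) ]

lemma mem_hpNbrs_of_adj {a b : ℤ × ℤ × ℤ} (h : hpLattice.Adj a b) : b ∈ hpNbrs a := by
  rcases h with (⟨h, hp⟩ | ⟨h, hp⟩ | ⟨h, hp⟩) | (⟨h, hp⟩ | ⟨h, hp⟩ | ⟨h, hp⟩) <;>
    subst h <;>
    simp only [hpNbrs, List.mem_cons, List.not_mem_nil, or_false, Prod.ext_iff] <;>
    [left; (right;left); (right;right); left; (right;left); (right;right)] <;>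
    split <;> simp <;> omega

def hpReach (s : ℤ × ℤ × ℤ) : (ℤ × ℤ × ℤ) → (ℤ × ℤ × ℤ) → ℕ → Bool
  | _, _, 0 => false
  | c, pr, k + 1 =>
      (hpNbrs c).any fun w => !decide (w = pr) && (decide (w = s) || hpReach s w c k)

open SimpleGraph Walk in
lemma hpReach_of_walk {s : ℤ × ℤ × ℤ} :
    ∀ (k : ℕ) (a prev : ℤ × ℤ × ℤ) (w : hpLattice.Walk a s),
      1 ≤ w.length → w.length ≤ k → w.support.Nodup → prev ≠ w.getVert 1 →
      hpReach s a prev k = true := by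
  intro k a prev w
  induction w generalizing k prev with
  | nil => simp
  | cons h w' ih =>
    rename_i u b _
    intro _ hlen hnd hprev
    obtain ⟨k, rfl⟩ : ∃ k', k = k' + 1 := ⟨k - 1, by omega⟩
    rw [hpReach, List.any_eq_true]
    refine ⟨b, mem_hpNbrs_of_adj h, ?_⟩
    have hb : b ≠ prev := by
      intro hbe; exact hprev (by simp [← hbe, getVert_cons_succ])
    simp only [hb, decide_eq_true_eq, Bool.not_eq_true', decide_eq_false_iff_not, ne_eq,
      Bool.and_eq_true, Bool.or_eq_true]
    refine ⟨by simpa using hb, ?_⟩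
    rcases Nat.eq_zero_or_pos w'.length with h0 | hpos
    · left
      have := w'.getVert_length
      rw [h0] at this
      simpa using this
    · right
      apply ih k u
      · exact hpos
      · simpa using hlen
      · exact (List.nodup_cons.mp (by simpa using hnd)).2
      · intro hu
        have h1 : w'.getVert 1 ∈ w'.support := by
          rw [mem_support_iff_exists_getVert]
          exact ⟨1, rfl, by omega⟩
        have := (List.nodup_cons.mp (by simpa using hnd)).1
        rw [← hu] at h1
        exact this h1

lemma hpNbrs_sub (a e : ℤ × ℤ × ℤ) (h1 : e.1 % 2 = 0) (h2 : e.2.1 % 2 = 0)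
    (h3 : e.2.2 % 2 = 0) : hpNbrs (a - e) = (hpNbrs a).map (fun v => v - e) := by
  obtain ⟨a1, a2, a3⟩ := a
  obtain ⟨e1, e2, e3⟩ := e
  simp only at h1 h2 h3
  simp only [hpNbrs, Prod.mk_sub_mk, List.map_cons, List.map_nil, List.cons.injEq, and_true]
  refine ⟨?_, ?_, ?_⟩ <;> split_ifs <;>
    (simp only [Prod.mk_sub_mk, Prod.mk.injEq, and_true, true_and]; omega)

lemma hpReach_sub (e : ℤ × ℤ × ℤ) (h1 : e.1 % 2 = 0) (h2 : e.2.1 % 2 = 0)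
    (h3 : e.2.2 % 2 = 0) (s : ℤ × ℤ × ℤ) :
    ∀ (k : ℕ) (c pr : ℤ × ℤ × ℤ),
      hpReach (s - e) (c - e) (pr - e) k = hpReach s c pr k := by
  intro k
  induction k with
  | zero => intro c pr; rfl
  | succ k ih =>
    intro c pr
    rw [hpReach, hpReach, hpNbrs_sub _ _ h1 h2 h3, List.any_map]
    congr 1
    funext w
    simp only [Function.comp_apply, sub_left_inj, ih]

set_option maxRecDepth 100000 in
set_option maxHeartbeats 4000000 in
lemma hpNoShort :
    ∀ s ∈ [((0:ℤ),(0:ℤ),(0:ℤ)), (0,0,1), (0,1,0), (0,1,1), (1,0,0), (1,0,1), (1,1,0), (1,1,1)],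
    ∀ v ∈ hpNbrs s, hpReach s v s 8 = false := by decide

def hpTenCycle : hpLattice.Walk ((0:ℤ),(0:ℤ),(0:ℤ)) ((0:ℤ),(0:ℤ),(0:ℤ)) :=
  .cons (v := ((1:ℤ),(0:ℤ),(0:ℤ))) (by decide) <|
  .cons (v := ((1:ℤ),(-1:ℤ),(0:ℤ))) (by decide) <|
  .cons (v := ((0:ℤ),(-1:ℤ),(0:ℤ))) (by decide) <|
  .cons (v := ((0:ℤ),(-2:ℤ),(0:ℤ))) (by decide) <|
  .cons (v := ((0:ℤ),(-2:ℤ),(1:ℤ))) (by decide) <|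
  .cons (v := ((0:ℤ),(-1:ℤ),(1:ℤ))) (by decide) <|
  .cons (v := ((-1:ℤ),(-1:ℤ),(1:ℤ))) (by decide) <|
  .cons (v := ((-1:ℤ),(0:ℤ),(1:ℤ))) (by decide) <|
  .cons (v := ((0:ℤ),(0:ℤ),(1:ℤ))) (by decide) <|
  .cons (by decide) .nil

/-- The girth of the hydrogen-peroxide lattice is 10: every cycle in the lattice has
length at least 10, and there exists a cycle of length exactly 10. -/
theorem hpLattice_girth_eq_ten :
    (∀ (p : ℤ × ℤ × ℤ) (c : hpLattice.Walk p p), c.IsCycle → 10 ≤ c.length) ∧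
    (∃ (p : ℤ × ℤ × ℤ) (c : hpLattice.Walk p p), c.IsCycle ∧ c.length = 10) := by
  constructor
  · intro p c hc
    by_contra hlt
    push_neg at hlt
    have h3 := hc.three_le_length
    have hnd := hc.2
    cases c with
    | nil => simp at h3
    | cons h rest =>
      rename_i v1
      cases rest with
      | nil => simp at h3
      | cons h2 rest2 =>
        rename_i v2
        cases rest2 with
        | nil => simp at h3
        | cons h3' rest3 =>
          rename_i v3
          set w : hpLattice.Walk v1 p := SimpleGraph.Walk.cons h2 (SimpleGraph.Walk.cons h3' rest3) with hw
          have hwnd : w.support.Nodup := by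
            simpa [SimpleGraph.Walk.support_cons] using hnd
          have hprev : p ≠ w.getVert 1 := by
            intro hpe
            have hv2 : w.getVert 1 = v2 := by simp [hw, SimpleGraph.Walk.getVert_cons_succ]
            rw [hv2] at hpe
            have hpmem : p ∈ rest3.support := SimpleGraph.Walk.end_mem_support _
            have : v2 ∉ (SimpleGraph.Walk.cons h3' rest3).support.tail := by
              have := hwnd
              simp only [hw, SimpleGraph.Walk.support_cons, List.nodup_cons] at this
              intro hm
              exact this.2.1 (by simpa using hm)
            exact this (by
              simp only [SimpleGraph.Walk.support_cons, List.tail_cons]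
              exact hpe ▸ hpmem)
          have hr : hpReach p v1 p 8 = true := by
            apply hpReach_of_walk 8 v1 p w
            · simp [hw]
            · simp only [SimpleGraph.Walk.length_cons] at hlt ⊢
              omega
            · exact hwnd
            · exact hprev
          have hv1 : v1 ∈ hpNbrs p := mem_hpNbrs_of_adj h
          -- translate to a representative in {0,1}^3
          set q : ℤ × ℤ × ℤ := (p.1 % 2, p.2.1 % 2, p.2.2 % 2) with hq
          set e : ℤ × ℤ × ℤ := p - q with he
          have he1 : e.1 % 2 = 0 := by simp [he, hq]
          have he2 : e.2.1 % 2 = 0 := by simp [he, hq]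
          have he3 : e.2.2 % 2 = 0 := by simp [he, hq]
          have hpq : p - e = q := by simp [he]
          have hvq : v1 - e ∈ hpNbrs q := by
            rw [← hpq, hpNbrs_sub _ _ he1 he2 he3]
            exact List.mem_map.mpr ⟨v1, hv1, rfl⟩
          have hr' : hpReach q (v1 - e) q 8 = true := by
            rw [← hpq, hpReach_sub _ he1 he2 he3, hr]
          have hqmem : q ∈ [((0:ℤ),(0:ℤ),(0:ℤ)), (0,0,1), (0,1,0), (0,1,1),
              (1,0,0), (1,0,1), (1,1,0), (1,1,1)] := by
            have h1 : p.1 % 2 = 0 ∨ p.1 % 2 = 1 := by omega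
            have h2' : p.2.1 % 2 = 0 ∨ p.2.1 % 2 = 1 := by omega
            have h3'' : p.2.2 % 2 = 0 ∨ p.2.2 % 2 = 1 := by omega
            rcases h1 with h1 | h1 <;> rcases h2' with h2' | h2' <;>
              rcases h3'' with h3'' | h3'' <;> simp [hq, h1, h2', h3'']
          have := hpNoShort q hqmem (v1 - e) hvq
          rw [hr'] at this
          simp at this
  · refine ⟨((0:ℤ),(0:ℤ),(0:ℤ)), hpTenCycle, ?_, by rfl⟩
    rw [SimpleGraph.Walk.isCycle_def, SimpleGraph.Walk.isTrail_def]
    refine ⟨?_, by simp [hpTenCycle], ?_⟩ <;> decide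
end
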